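/- arXiv:1803.07169 — 10 statements merged into one kernel-verified Lean document; each statement's English description precedes it below -/
import Mathlib

section
/- For every complex number s, every j ∈ {-1, 1}, and every natural number m, the absolute value of j^m times the generalized binomial coefficient C(-s, m) is at most (-1)^m · C(-|s|, m). -/
/-- Generalized binomial coefficient C(w,m) = w(w-1)⋯(w-m+1)/m!. -/
noncomputable def genBinom {K : Type*} [Field K] (w : K) (m : ℕ) : K :=
  (∏ i ∈ Finset.range m, (w - i)) / (m.factorial : K)

theorem stmt_0 (s : ℂ) (j : ℂ) (hj : j = -1 ∨ j = 1) (m : ℕ) :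
    ‖j ^ m * genBinom (-s) m‖ ≤ (-1 : ℝ) ^ m * genBinom (-‖s‖) m := by
  have hjn : ‖j‖ = 1 := by rcases hj with h | h <;> simp [h]
  have key : (-1 : ℝ) ^ m * genBinom (-‖s‖) m
      = (∏ i ∈ Finset.range m, (‖s‖ + i)) / (m.factorial : ℝ) := by
    rw [genBinom, mul_div_assoc']
    congr 1
    rw [show (-1:ℝ)^m = ∏ _i ∈ Finset.range m, (-1:ℝ) by simp, ← Finset.prod_mul_distrib]
    exact Finset.prod_congr rfl (fun i _ => by ring)
  rw [key, norm_mul, norm_pow, hjn, one_pow, one_mul, genBinom, norm_div]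
  have h1 : ‖((m.factorial : ℂ))‖ = (m.factorial : ℝ) := by
    simp
  rw [h1]
  have hb : ‖∏ i ∈ Finset.range m, (-s - (i : ℂ))‖ ≤ ∏ i ∈ Finset.range m, (‖s‖ + i) := calc
    ‖∏ i ∈ Finset.range m, (-s - (i : ℂ))‖
      ≤ ∏ i ∈ Finset.range m, ‖(-s - (i : ℂ))‖ := le_of_eq (norm_prod _ _)
    _ ≤ ∏ i ∈ Finset.range m, (‖s‖ + i) := by
        apply Finset.prod_le_prod (fun i _ => norm_nonneg _)
        intro i _
        calc ‖(-s - (i : ℂ))‖ ≤ ‖(-s : ℂ)‖ + ‖(i : ℂ)‖ := norm_sub_le _ _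
          _ = ‖s‖ + i := by simp
  exact div_le_div_of_nonneg_right hb (by positivity)
end

section
/- Let (a_n) be a bounded sequence of complex numbers, m₀ a nonnegative integer, q a positive integer, and j ∈ {-1, 1}. Then the double series ∑_{n=q+1}^∞ ∑_{m=m₀}^∞ (jq)^m · C(-s, m) · a_n / n^{s+m} converges absolutely for every complex s with Re(s) > 1 - m₀. -/
theorem stmt_1 (a : ℕ → ℂ) (C : ℝ) (hC : ∀ n, ‖a n‖ ≤ C)
    (m₀ : ℕ) (q : ℕ) (hq : 0 < q) (j : ℂ) (hj : j = -1 ∨ j = 1)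
    (s : ℂ) (hs : 1 - (m₀ : ℝ) < s.re) :
    Summable (fun p : ℕ × ℕ =>
      ‖(j * q) ^ (m₀ + p.2) * genBinom (-s) (m₀ + p.2) *
        a (q + 1 + p.1) / ((q + 1 + p.1 : ℕ) : ℂ) ^ (s + (m₀ + p.2 : ℕ))‖) := by
  -- constants
  set c : ℝ := ‖s‖ + 1 with hc
  have hc1 : (1 : ℝ) ≤ c := by rw [hc]; linarith [norm_nonneg s]
  set r : ℝ := q / (q + 1) with hr
  have hq0 : (0 : ℝ) < q := by exact_mod_cast hq
  have hr0 : 0 < r := by positivity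
  have hr1 : r < 1 := by
    rw [hr, div_lt_one (by positivity)]; linarith
  set t : ℝ := s.re + m₀ with ht
  have ht1 : 1 < t := by rw [ht]; linarith
  set B : ℕ → ℝ := fun k => (∏ i ∈ Finset.range k, (c + i)) / k.factorial with hB
  have hBpos : ∀ k, 0 < B k := by
    intro k
    apply div_pos
    · exact Finset.prod_pos fun i _ => by positivity
    · exact_mod_cast k.factorial_pos
  have hBsucc : ∀ m : ℕ, B (m + 1) = B m * ((c + m) / (m + 1)) := by
    intro m
    simp only [hB, Finset.prod_range_succ, Nat.factorial_succ]
    have hf : ((m).factorial : ℝ) ≠ 0 := by exact_mod_cast m.factorial_pos.ne'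
    have hm1 : ((m : ℝ) + 1) ≠ 0 := by positivity
    push_cast
    field_simp
  -- majorant functions
  set g : ℕ → ℝ := fun i => (((q + 1 + i : ℕ) : ℝ) ^ t)⁻¹ with hg
  set h : ℕ → ℝ := fun k => (q : ℝ) ^ m₀ * B (m₀ + k) * r ^ k with hh
  have hgs : Summable g := by
    have : Summable fun n : ℕ => (((n : ℕ) : ℝ) ^ t)⁻¹ := Real.summable_nat_rpow_inv.mpr ht1
    exact this.comp_injective (fun x y hxy => by omega)
  have hhs : Summable h := by
    apply summable_of_ratio_test_tendsto_lt_one hr1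
    · filter_upwards with k
      have := hBpos (m₀ + k)
      simp only [hh]
      positivity
    · have key : ∀ k : ℕ, ‖h (k + 1)‖ / ‖h k‖ = (c + (m₀ + k)) / ((m₀ + k) + 1) * r := by
        intro k
        have h1 : 0 < h k := by simp only [hh]; have := hBpos (m₀ + k); positivity
        have h2 : 0 < h (k + 1) := by simp only [hh]; have := hBpos (m₀ + (k + 1)); positivity
        rw [Real.norm_of_nonneg h1.le, Real.norm_of_nonneg h2.le]
        have e1 : m₀ + (k + 1) = (m₀ + k) + 1 := by ring
        simp only [hh, e1, hBsucc (m₀ + k), pow_succ]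
        have hBk := (hBpos (m₀ + k)).ne'
        have hqm : (0:ℝ) < (q:ℝ) ^ m₀ := by positivity
        have hrk : (0:ℝ) < r ^ k := by positivity
        have hmk1 : ((m₀:ℝ) + k + 1) ≠ 0 := by positivity
        push_cast
        field_simp
      simp only [key]
      have key2 : Filter.Tendsto (fun k : ℕ => (c + ((m₀:ℝ) + k)) / (((m₀:ℝ) + k) + 1))
          Filter.atTop (nhds 1) := by
        have he : ∀ k : ℕ, (c + ((m₀:ℝ) + k)) / (((m₀ : ℝ) + k) + 1)
            = 1 + (c - 1) / (((m₀ : ℝ) + k) + 1) := by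
          intro k
          have : ((m₀ : ℝ) + k) + 1 ≠ 0 := by positivity
          field_simp
          ring
        simp only [he]
        have : Filter.Tendsto (fun k : ℕ => (c - 1) / (((m₀ : ℝ) + k) + 1)) Filter.atTop (nhds 0) := by
          apply Filter.Tendsto.div_atTop tendsto_const_nhds
          apply Filter.tendsto_atTop_add_const_right
          apply Filter.tendsto_atTop_add_const_left
          exact tendsto_natCast_atTop_atTop
        simpa using tendsto_const_nhds.add this
      simpa using key2.mul_const r
  -- combine
  have hCs : Summable fun p : ℕ × ℕ => (max C 0) * (g p.1 * h p.2) := by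
    apply Summable.mul_left
    apply hgs.mul_of_nonneg hhs
    · intro i; simp only [hg]; positivity
    · intro k; simp only [hh]; have := hBpos (m₀ + k); positivity
  apply Summable.of_nonneg_of_le (fun p => norm_nonneg _) _ hCs
  rintro ⟨i, k'⟩
  simp only
  set n : ℕ := q + 1 + i with hn
  set k : ℕ := m₀ + k' with hk
  have hn0 : 0 < n := by omega
  have hnR : (0 : ℝ) < (n : ℝ) := by exact_mod_cast hn0
  have hnq : (q : ℝ) + 1 ≤ (n : ℝ) := by exact_mod_cast Nat.le.intro rfl
  -- norm computation
  have hjq : ‖j * (q : ℂ)‖ = (q : ℝ) := by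
    rcases hj with hj | hj <;> simp [hj]
  have hcpow : ‖((n : ℕ) : ℂ) ^ (s + (k : ℕ))‖ = (n : ℝ) ^ (s.re + (k:ℝ)) := by
    rw [Complex.norm_natCast_cpow_of_pos hn0]
    norm_num
  have hG : ‖genBinom (-s) k‖ ≤ B k := by
    have hnum : ‖∏ i ∈ Finset.range k, (-s - (i:ℂ))‖ ≤ ∏ i ∈ Finset.range k, (c + (i:ℝ)) := by
      rw [norm_prod]
      apply Finset.prod_le_prod (fun i _ => norm_nonneg _)
      intro i _
      calc ‖-s - (i:ℂ)‖ ≤ ‖-s‖ + ‖(i:ℂ)‖ := norm_sub_le _ _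
        _ = ‖s‖ + i := by simp
        _ ≤ c + i := by rw [hc]; linarith
    rw [genBinom, norm_div]
    simp only [hB, Complex.norm_natCast]
    have hf : (0:ℝ) < (k.factorial : ℝ) := by exact_mod_cast k.factorial_pos
    exact div_le_div_of_nonneg_right hnum hf.le
  -- equality form of the LHS
  have hLHS : ‖(j * q) ^ k * genBinom (-s) k * a n / ((n : ℕ) : ℂ) ^ (s + (k : ℕ))‖
      = ‖a n‖ * ‖genBinom (-s) k‖ * ((q:ℝ)^m₀ * (((n:ℝ)^t)⁻¹ * ((q:ℝ)/n)^k')) := by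
    rw [norm_div, norm_mul, norm_mul, norm_pow, hjq, hcpow]
    have hsplit : (n:ℝ) ^ (s.re + (k:ℝ)) = (n:ℝ)^t * (n:ℝ)^(k':ℕ) := by
      rw [← Real.rpow_natCast (n:ℝ) k', ← Real.rpow_add hnR]
      congr 1
      rw [ht, hk]
      push_cast
      ring
    rw [hsplit, hk, pow_add, div_pow]
    have h1 : (0:ℝ) < (n:ℝ)^t := Real.rpow_pos_of_pos hnR t
    have h2 : (0:ℝ) < (n:ℝ)^k' := by positivity
    field_simp
  rw [hLHS]
  have hqn : (q:ℝ)/n ≤ r := by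
    rw [hr]
    apply div_le_div_of_nonneg_left hq0.le (by positivity) hnq
  calc ‖a n‖ * ‖genBinom (-s) k‖ * ((q:ℝ)^m₀ * (((n:ℝ)^t)⁻¹ * ((q:ℝ)/n)^k'))
      ≤ (max C 0) * B k * ((q:ℝ)^m₀ * (((n:ℝ)^t)⁻¹ * r^k')) := by
        have h1 : (0:ℝ) ≤ ((n:ℝ)^t)⁻¹ := by positivity
        have h2 : (0:ℝ) ≤ (q:ℝ)/n := by positivity
        gcongr
        exact (hC n).trans (le_max_left _ _)
    _ = (max C 0) * (g i * h k') := by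
        simp only [hg, hh, hk, hn]
        ring
end

section
/- Let (a_n) be a bounded sequence of complex numbers, m₀ a nonnegative integer, q a positive integer, and j ∈ {-1,1}. For any s with σ = Re(s) > 1 - m₀, the double series ∑_{n>q} ∑_{m≥m₀} |(jq)^m C(-s,m) a_n n^{-s-m}| is bounded above by (sup_n |a_n|) · (q+1)^{m₀+|s|} · ζ(σ+m₀). -/
open Finset intervalIntegral

lemma binom_sum_le (M : ℕ) : ∀ r y : ℝ, 0 ≤ r → 0 ≤ y → y < 1 →
    ∑ m ∈ Finset.range M, (∏ i ∈ Finset.range m, (r + i)) / m.factorial * y ^ m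
      ≤ (1 - y) ^ (-r) := by
  induction M with
  | zero =>
      intro r y hr hy0 hy1
      simp only [Finset.range_zero, Finset.sum_empty]
      exact Real.rpow_nonneg (by linarith) _
  | succ M IH =>
      intro r y hr hy0 hy1
      have h1y : 0 < 1 - y := by linarith
      rw [Finset.sum_range_succ']
      simp only [Finset.range_zero, Finset.prod_empty, Nat.factorial_zero, pow_zero,
        Nat.cast_one, div_one, one_mul]
      rcases hr.eq_or_lt with hr0 | hr'
      · have : ∀ m ∈ Finset.range M,
            (∏ i ∈ Finset.range (m+1), (r + (i:ℝ))) / (m+1).factorial * y ^ (m+1) = 0 := by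
          intro m _
          rw [Finset.prod_range_succ']
          simp [← hr0]
        rw [Finset.sum_congr rfl this]
        simp [← hr0]
      · have key : ∀ m : ℕ,
            (∏ i ∈ Finset.range (m+1), (r + (i:ℝ))) / (m+1).factorial * y ^ (m+1)
              = r * ((∏ i ∈ Finset.range m, ((r+1) + (i:ℝ))) / m.factorial
                  * ∫ t in (0:ℝ)..y, t ^ m) := by
          intro m
          rw [integral_pow, Finset.prod_range_succ']
          have hP : ∏ i ∈ Finset.range m, (r + ((i+1 : ℕ):ℝ))
              = ∏ i ∈ Finset.range m, ((r+1) + (i:ℝ)) :=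
            Finset.prod_congr rfl fun i _ => by push_cast; ring
          rw [hP, Nat.factorial_succ]
          have hfac : (m.factorial : ℝ) ≠ 0 := by positivity
          push_cast
          rw [zero_pow (Nat.succ_ne_zero m)]
          field_simp
          ring
        rw [Finset.sum_congr rfl fun m _ => key m, ← Finset.mul_sum]
        have hintg : ∀ m : ℕ, IntervalIntegrable
            (fun t : ℝ => (∏ i ∈ Finset.range m, ((r+1) + (i:ℝ))) / m.factorial * t ^ m)
            MeasureTheory.volume 0 y :=
          fun m => Continuous.intervalIntegrable (by continuity) 0 y
        have hsum_int : ∑ m ∈ Finset.range M,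
              ((∏ i ∈ Finset.range m, ((r+1) + (i:ℝ))) / m.factorial * ∫ t in (0:ℝ)..y, t ^ m)
            = ∫ t in (0:ℝ)..y, ∑ m ∈ Finset.range M,
                (∏ i ∈ Finset.range m, ((r+1) + (i:ℝ))) / m.factorial * t ^ m := by
          rw [intervalIntegral.integral_finset_sum (fun m _ => hintg m)]
          exact Finset.sum_congr rfl fun m _ => (intervalIntegral.integral_const_mul _ _).symm
        rw [hsum_int]
        have hcont_rpow : ContinuousOn (fun t : ℝ => (1 - t) ^ (-(r+1))) (Set.uIcc 0 y) := by
          apply ContinuousOn.rpow_const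
          · exact (continuous_const.sub continuous_id).continuousOn
          · intro t ht
            rw [Set.uIcc_of_le hy0] at ht
            have := lt_of_le_of_lt ht.2 hy1
            exact Or.inl (by intro h; nlinarith)
        have hle : r * (∫ t in (0:ℝ)..y, ∑ m ∈ Finset.range M,
                (∏ i ∈ Finset.range m, ((r+1) + (i:ℝ))) / m.factorial * t ^ m)
            ≤ r * ∫ t in (0:ℝ)..y, (1 - t) ^ (-(r+1)) := by
          apply mul_le_mul_of_nonneg_left _ hr
          apply intervalIntegral.integral_mono_on hy0
            (Continuous.intervalIntegrable (by continuity) 0 y)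
            hcont_rpow.intervalIntegrable
          intro t ht
          exact IH (r+1) t (by linarith) ht.1 (lt_of_le_of_lt ht.2 hy1)
        have hFTC : (∫ t in (0:ℝ)..y, r * (1 - t) ^ (-(r+1))) = (1 - y) ^ (-r) - 1 := by
          have hderiv : ∀ t ∈ Set.uIcc (0:ℝ) y,
              HasDerivAt (fun u : ℝ => (1 - u) ^ (-r)) (r * (1 - t) ^ (-(r+1))) t := by
            intro t ht
            rw [Set.uIcc_of_le hy0] at ht
            have h1t : (0:ℝ) < 1 - t := by
              have := lt_of_le_of_lt ht.2 hy1; linarith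
            have hb : HasDerivAt (fun u : ℝ => 1 - u) (-1) t := (hasDerivAt_id t).const_sub 1
            have hcomp := (Real.hasDerivAt_rpow_const (x := 1 - t) (p := -r)
              (Or.inl h1t.ne')).comp t hb
            have heq : r * (1 - t) ^ (-(r+1)) = (-r) * (1 - t) ^ (-r - 1) * (-1) := by
              rw [show -r - 1 = -(r+1) by ring]; ring
            rw [heq]
            exact hcomp
          rw [intervalIntegral.integral_eq_sub_of_hasDerivAt hderiv
            ((continuousOn_const.mul hcont_rpow).intervalIntegrable)]
          rw [sub_zero, Real.one_rpow]
        rw [add_comm]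
        calc 1 + r * (∫ t in (0:ℝ)..y, ∑ m ∈ Finset.range M,
                (∏ i ∈ Finset.range m, ((r+1) + (i:ℝ))) / m.factorial * t ^ m)
            ≤ 1 + r * ∫ t in (0:ℝ)..y, (1 - t) ^ (-(r+1)) := by linarith
          _ = 1 + ∫ t in (0:ℝ)..y, r * (1 - t) ^ (-(r+1)) := by
              rw [intervalIntegral.integral_const_mul]
          _ = (1 - y) ^ (-r) := by rw [hFTC]; ring

lemma binom_term_nonneg (r y : ℝ) (hr : 0 ≤ r) (hy0 : 0 ≤ y) (m : ℕ) :
    0 ≤ (∏ i ∈ Finset.range m, (r + i)) / m.factorial * y ^ m := by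
  apply mul_nonneg _ (pow_nonneg hy0 _)
  apply div_nonneg _ (by positivity)
  exact Finset.prod_nonneg fun i _ => by positivity

lemma binom_summable (r y : ℝ) (hr : 0 ≤ r) (hy0 : 0 ≤ y) (hy1 : y < 1) :
    Summable (fun m => (∏ i ∈ Finset.range m, (r + i)) / m.factorial * y ^ m) :=
  summable_of_sum_range_le (binom_term_nonneg r y hr hy0)
    (fun M => binom_sum_le M r y hr hy0 hy1)

lemma binom_tsum_le (r y : ℝ) (hr : 0 ≤ r) (hy0 : 0 ≤ y) (hy1 : y < 1) :
    (∑' m, (∏ i ∈ Finset.range m, (r + i)) / m.factorial * y ^ m) ≤ (1 - y) ^ (-r) :=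
  Summable.tsum_le_of_sum_range_le (binom_summable r y hr hy0 hy1)
    (fun M => binom_sum_le M r y hr hy0 hy1)

set_option maxHeartbeats 2000000 in
theorem stmt_2 (a : ℕ → ℂ) (C : ℝ) (hC : ∀ n, ‖a n‖ ≤ C)
    (m₀ : ℕ) (q : ℕ) (hq : 0 < q) (j : ℂ) (hj : j = -1 ∨ j = 1)
    (s : ℂ) (hs : 1 - (m₀ : ℝ) < s.re) :
    (∑' p : ℕ × ℕ,
      ‖(j * q) ^ (m₀ + p.2) * genBinom (-s) (m₀ + p.2) *
        a (q + 1 + p.1) / ((q + 1 + p.1 : ℕ) : ℂ) ^ (s + (m₀ + p.2 : ℕ))‖)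
      ≤ (⨆ n, ‖a n‖) * ((q : ℝ) + 1) ^ ((m₀ : ℝ) + ‖s‖) *
          ∑' n : ℕ+, (n : ℝ) ^ (-(s.re + m₀)) := by
  set r : ℝ := ‖s‖ with hr_def
  set σ : ℝ := s.re with hσ_def
  have hr0 : 0 ≤ r := norm_nonneg s
  have hσr : σ ≤ r := by
    rw [hr_def]
    exact (le_abs_self _).trans (Complex.abs_re_le_norm s)
  have hσ1 : 1 < σ + m₀ := by linarith
  have hq1 : (1:ℝ) ≤ (q:ℝ) := by exact_mod_cast hq
  have hqp : (0:ℝ) < (q:ℝ) + 1 := by linarith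
  set y : ℝ := (q:ℝ) / ((q:ℝ) + 1) with hy_def
  have hy0 : 0 ≤ y := by positivity
  have hy1 : y < 1 := by rw [hy_def, div_lt_one hqp]; linarith
  have h1y : 1 - y = ((q:ℝ) + 1)⁻¹ := by rw [hy_def]; field_simp; ring
  set c : ℕ → ℝ := fun m => (∏ i ∈ Finset.range m, (r + i)) / m.factorial with hc_def
  have hc0 : ∀ m, 0 ≤ c m := fun m => by
    apply div_nonneg _ (by positivity)
    exact Finset.prod_nonneg fun i _ => by positivity
  -- bound on genBinom
  have hgb : ∀ m : ℕ, ‖genBinom (-s) m‖ ≤ c m := by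
    intro m
    rw [genBinom, norm_div]
    have hden : ‖((m.factorial : ℂ))‖ = (m.factorial : ℝ) := by
      simp
    rw [hden]
    simp only [hc_def]
    gcongr
    calc ‖∏ i ∈ Finset.range m, (-s - (i:ℂ))‖
        = ∏ i ∈ Finset.range m, ‖-s - (i:ℂ)‖ := norm_prod _ _
      _ ≤ ∏ i ∈ Finset.range m, (r + (i:ℝ)) := by
          apply Finset.prod_le_prod (fun i _ => norm_nonneg _)
          intro i _
          rw [show -s - (i:ℂ) = -(s + i) by ring, norm_neg]
          exact (norm_add_le s i).trans (le_of_eq (by rw [Complex.norm_natCast, hr_def]))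
  -- supremum facts
  have hbdd : BddAbove (Set.range fun n => ‖a n‖) := ⟨C, by rintro x ⟨n, rfl⟩; exact hC n⟩
  set Cs : ℝ := ⨆ n, ‖a n‖ with hCs_def
  have haC : ∀ n, ‖a n‖ ≤ Cs := fun n => le_ciSup hbdd n
  have hCs0 : 0 ≤ Cs := (norm_nonneg (a 0)).trans (haC 0)
  -- majorant sequences
  set G : ℕ → ℝ := fun k => Cs * (((q:ℝ) + 1) ^ m₀ * (c (m₀ + k) * y ^ (m₀ + k))) with hG_def
  set H : ℕ → ℝ := fun n => ((q + 1 + n : ℕ) : ℝ) ^ (-(σ + (m₀:ℝ))) with hH_def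
  have hG0 : ∀ k, 0 ≤ G k := fun k => by
    apply mul_nonneg hCs0
    exact mul_nonneg (by positivity) (mul_nonneg (hc0 _) (pow_nonneg hy0 _))
  have hH0 : ∀ n, 0 ≤ H n := fun n =>
    Real.rpow_nonneg (by positivity) _
  have hsum_cy : Summable (fun m => c m * y ^ m) := binom_summable r y hr0 hy0 hy1
  have hsumG : Summable G := by
    apply Summable.mul_left
    apply Summable.mul_left
    exact hsum_cy.comp_injective (add_right_injective m₀)
  have hsumH : Summable H := by
    have : Summable (fun N : ℕ => (N:ℝ) ^ (-(σ + (m₀:ℝ)))) :=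
      Real.summable_nat_rpow.2 (by linarith)
    exact this.comp_injective (fun x y' h => by omega)
  -- termwise bound
  have hterm : ∀ (n k : ℕ),
      ‖(j * q) ^ (m₀ + k) * genBinom (-s) (m₀ + k) * a (q + 1 + n) /
          ((q + 1 + n : ℕ) : ℂ) ^ (s + (m₀ + k : ℕ))‖ ≤ H n * G k := by
    intro n k
    set m : ℕ := m₀ + k with hm
    set N : ℕ := q + 1 + n with hN
    have hNq : (q:ℝ) + 1 ≤ (N:ℝ) := by
      rw [hN]; push_cast; linarith [Nat.cast_nonneg (α := ℝ) n]
    have hN0 : (0:ℝ) < (N:ℝ) := by linarith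
    rw [norm_div, norm_mul, norm_mul, norm_pow]
    have hjq : ‖j * (q:ℂ)‖ = (q:ℝ) := by rcases hj with rfl | rfl <;> simp
    have hden : ‖((N:ℕ):ℂ) ^ (s + (m:ℕ))‖ = (N:ℝ) ^ (σ + (m:ℝ)) := by
      rw [show ((N:ℕ):ℂ) = ((N:ℝ):ℂ) by push_cast; rfl]
      rw [Complex.norm_cpow_eq_rpow_re_of_pos hN0]
      have : (s + ((m:ℕ):ℂ)).re = σ + (m:ℝ) := by simp [hσ_def]
      rw [this]
    rw [hjq, hden]
    have hsplit : (N:ℝ) ^ (σ + (m:ℝ)) = (N:ℝ) ^ (σ + (m₀:ℝ)) * (N:ℝ) ^ (k:ℕ) := by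
      rw [← Real.rpow_natCast (N:ℝ) k, ← Real.rpow_add hN0]
      congr 1
      rw [hm]; push_cast; ring
    rw [hsplit]
    have step1 : (q:ℝ) ^ m * ‖genBinom (-s) m‖ * ‖a N‖ /
          ((N:ℝ) ^ (σ + (m₀:ℝ)) * (N:ℝ) ^ k)
        ≤ (q:ℝ) ^ m * c m * Cs / ((N:ℝ) ^ (σ + (m₀:ℝ)) * ((q:ℝ) + 1) ^ k) := by
      apply div_le_div₀
      · exact mul_nonneg (mul_nonneg (by positivity) (hc0 m)) hCs0
      · refine mul_le_mul ?_ (haC N) (norm_nonneg _) (mul_nonneg (by positivity) (hc0 m))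
        exact mul_le_mul_of_nonneg_left (hgb m) (by positivity)
      · exact mul_pos (Real.rpow_pos_of_pos hN0 _) (by positivity)
      · exact mul_le_mul_of_nonneg_left (pow_le_pow_left₀ (by linarith) hNq k)
          (Real.rpow_pos_of_pos hN0 _).le
    refine step1.trans (le_of_eq ?_)
    have hqq : ((q:ℝ) + 1) ^ m = ((q:ℝ) + 1) ^ m₀ * ((q:ℝ) + 1) ^ k := by
      rw [hm, pow_add]
    rw [hH_def, hG_def]
    simp only [hy_def, div_pow, ← hN, Real.rpow_neg hN0.le]
    field_simp
    rw [hqq]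
    ring
  -- assemble
  have hmaj : Summable (fun p : ℕ × ℕ => H p.1 * G p.2) :=
    hsumH.mul_of_nonneg hsumG (fun n => hH0 n) (fun k => hG0 k)
  have hsummLHS : Summable (fun p : ℕ × ℕ =>
      ‖(j * q) ^ (m₀ + p.2) * genBinom (-s) (m₀ + p.2) *
        a (q + 1 + p.1) / ((q + 1 + p.1 : ℕ) : ℂ) ^ (s + (m₀ + p.2 : ℕ))‖) :=
    Summable.of_nonneg_of_le (fun p => norm_nonneg _) (fun p => hterm p.1 p.2) hmaj
  refine (Summable.tsum_le_tsum (f := fun p : ℕ × ℕ =>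
      ‖(j * q) ^ (m₀ + p.2) * genBinom (-s) (m₀ + p.2) *
        a (q + 1 + p.1) / ((q + 1 + p.1 : ℕ) : ℂ) ^ (s + (m₀ + p.2 : ℕ))‖)
    (g := fun p : ℕ × ℕ => H p.1 * G p.2) (fun p => hterm p.1 p.2) hsummLHS hmaj).trans ?_
  have hprod : (∑' p : ℕ × ℕ, H p.1 * G p.2) = (∑' n, H n) * (∑' k, G k) :=
    (Summable.tsum_mul_tsum (f := H) (g := G) hsumH hsumG hmaj).symm
  rw [hprod]
  -- bound the G-sum
  have hTG : (∑' k, G k) ≤ Cs * ((q:ℝ) + 1) ^ ((m₀:ℝ) + r) := by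
    have h1 : (∑' k, G k)
        = Cs * (((q:ℝ)+1)^m₀ * ∑' k, (c (m₀+k) * y^(m₀+k))) := by
      rw [hG_def, tsum_mul_left, tsum_mul_left]
    rw [h1]
    have h2 : (∑' k, c (m₀+k) * y^(m₀+k)) ≤ ∑' m, c m * y ^ m :=
      Summable.tsum_le_tsum_of_inj (fun k => m₀ + k) (add_right_injective m₀)
        (fun c' _ => mul_nonneg (hc0 _) (pow_nonneg hy0 _)) (fun k => le_rfl)
        (hsum_cy.comp_injective (add_right_injective m₀)) hsum_cy
    have h3 : (∑' m, c m * y ^ m) ≤ ((q:ℝ)+1) ^ r := by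
      have hb := binom_tsum_le r y hr0 hy0 hy1
      rwa [h1y, Real.inv_rpow (by positivity), Real.rpow_neg (by positivity),
        inv_inv] at hb
    calc Cs * (((q:ℝ)+1)^m₀ * ∑' k, (c (m₀+k) * y^(m₀+k)))
        ≤ Cs * (((q:ℝ)+1)^m₀ * ((q:ℝ)+1)^r) := by
          apply mul_le_mul_of_nonneg_left _ hCs0
          exact mul_le_mul_of_nonneg_left (h2.trans h3) (by positivity)
      _ = Cs * ((q:ℝ)+1) ^ ((m₀:ℝ) + r) := by
          rw [Real.rpow_add hqp, Real.rpow_natCast]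
  -- bound the H-sum
  have hsumP : Summable (fun n : ℕ+ => ((n:ℕ):ℝ)^(-(σ + (m₀:ℝ)))) := by
    have h := Real.summable_nat_rpow (p := -(σ + (m₀:ℝ))) |>.2 (by linarith)
    exact h.comp_injective (fun a b hab => PNat.coe_injective hab)
  have hTH : (∑' n, H n) ≤ ∑' n : ℕ+, ((n:ℕ):ℝ)^(-(σ + (m₀:ℝ))) := by
    apply Summable.tsum_le_tsum_of_inj (fun n : ℕ => (⟨q+1+n, by omega⟩ : ℕ+))
      (fun a b hab => by
        rw [Subtype.mk_eq_mk] at hab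
        omega)
      (fun c' _ => Real.rpow_nonneg (by positivity) _)
      (fun n => le_of_eq (by simp only [hH_def, PNat.mk_coe]))
      hsumH hsumP
  have hZ0 : 0 ≤ ∑' n : ℕ+, ((n:ℕ):ℝ)^(-(σ + (m₀:ℝ))) :=
    tsum_nonneg (fun n => Real.rpow_nonneg (by positivity) _)
  calc (∑' n, H n) * (∑' k, G k)
      ≤ (∑' n : ℕ+, ((n:ℕ):ℝ)^(-(σ + (m₀:ℝ)))) * (Cs * ((q:ℝ) + 1) ^ ((m₀:ℝ) + r)) :=
        mul_le_mul hTH hTG (tsum_nonneg (fun k => hG0 k)) hZ0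
    _ = Cs * ((q:ℝ) + 1) ^ ((m₀:ℝ) + r) * ∑' n : ℕ+, ((n:ℕ):ℝ)^(-(σ + (m₀:ℝ))) := by
        ring
end

section
/- Let α > 1 be irrational, and let α' satisfy 1/α + 1/α' = 1. Then for every positive integer n, the fractional part of (⌊α'n⌋ + 1)/α lies in the open interval (1/α, 1). -/
theorem stmt_5 (α α' : ℝ) (hα : 1 < α) (hirr : Irrational α)
    (hconj : 1 / α + 1 / α' = 1) (n : ℕ) (hn : 0 < n) :
    Int.fract (((⌊α' * n⌋ : ℝ) + 1) / α) ∈ Set.Ioo (1 / α) 1 := by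
  have hα0 : (0:ℝ) < α := by linarith
  have hinvα : 0 < 1/α := by positivity
  have hinvα1 : 1/α < 1 := by rw [div_lt_one hα0]; linarith
  have hinvα' : 1/α' = 1 - 1/α := by linarith
  have h1 : 0 < 1/α' := by rw [hinvα']; linarith
  have h2 : 1/α' < 1 := by rw [hinvα']; linarith
  have hα'0 : 0 < α' := by
    by_contra h
    push_neg at h
    have : 1/α' ≤ 0 := div_nonpos_of_nonneg_of_nonpos zero_le_one h
    linarith
  have hα'1 : 1 < α' := by rw [div_lt_one hα'0] at h2; exact h2
  have hirr' : Irrational α' := by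
    have h3 : Irrational (1/α) := by rw [one_div]; exact hirr.inv
    have h4 : Irrational (1/α') := by
      rw [hinvα']
      have := h3.neg.intCast_add 1
      simpa [sub_eq_add_neg] using this
    rw [one_div] at h4
    exact h4.of_inv
  have hirrn : Irrational (α' * n) := by
    have := hirr'.natCast_mul (m := n) hn.ne'
    rwa [mul_comm] at this
  have hm_lt : (⌊α' * n⌋ : ℝ) < α' * n := by
    rcases lt_or_eq_of_le (Int.floor_le (α' * n)) with h | h
    · exact h
    · exact absurd h.symm (by simpa using hirrn.ne_int ⌊α' * n⌋)
  have hm_gt : α' * n < (⌊α' * n⌋ : ℝ) + 1 := Int.lt_floor_add_one _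
  set m : ℤ := ⌊α' * n⌋ with hm
  have hα'ne : α' ≠ 0 := hα'0.ne'
  have hαne : α ≠ 0 := hα0.ne'
  have hinvα2 : 1/α = 1 - 1/α' := by linarith
  have key : ((m:ℝ) + 1) / α = ((m:ℝ) + 1) + (-(((m:ℝ)+1)/α')) := by
    calc ((m:ℝ)+1)/α = ((m:ℝ)+1)*(1/α) := by ring
      _ = ((m:ℝ)+1)*(1-1/α') := by rw [hinvα2]
      _ = ((m:ℝ) + 1) + (-(((m:ℝ)+1)/α')) := by ring
  have hub : ((m:ℝ)+1)/α' < (n:ℝ) + 1/α' := by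
    rw [div_lt_iff₀ hα'0]
    have : ((n:ℝ) + 1/α') * α' = α' * n + 1 := by field_simp
    rw [this]; linarith
  have hlb : (n:ℝ) < ((m:ℝ)+1)/α' := by
    rw [lt_div_iff₀ hα'0]
    nlinarith [hm_gt]
  have hfloor : ⌊-(((m:ℝ)+1)/α')⌋ = -((n:ℤ)+1) := by
    rw [Int.floor_eq_iff]
    constructor
    · push_cast; nlinarith [hub, h2]
    · push_cast; linarith
  have hfract : Int.fract (((m:ℝ) + 1) / α) = (n:ℝ) + 1 - ((m:ℝ)+1)/α' := by
    rw [key]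
    have : ((m:ℝ) + 1) = ((m + 1 : ℤ) : ℝ) := by push_cast; ring
    rw [this] at hfloor ⊢
    rw [Int.fract_intCast_add, Int.fract, hfloor]
    push_cast; ring
  rw [hfract]
  constructor
  · rw [hinvα2]
    linarith [hub]
  · linarith
end

section
/- Let α > 1 be irrational and β = 1/α. Then for all s with Re(s) > 1, the Dirichlet series ∑_{n≥1} (⌈β(n+1)⌉ - ⌈βn⌉)/n^s equals the Beatty zeta function ζ_α(s) = ∑_{n≥1} ⌊αn⌋^{-s}. -/
theorem stmt_7 (α : ℝ) (hα : 1 < α) (hirr : Irrational α) (β : ℝ) (hβ : β = 1 / α)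
    (s : ℂ) (hs : 1 < s.re) :
    ∑' n : ℕ+, ((⌈β * ((n : ℝ) + 1)⌉ - ⌈β * n⌉ : ℤ) : ℂ) / (n : ℂ) ^ s
      = ∑' n : ℕ+, ((⌊α * n⌋ : ℂ)) ^ (-s) := by
  have hα0 : (0:ℝ) < α := by linarith
  have hβ0 : 0 < β := by rw [hβ]; positivity
  have hβ1 : β < 1 := by rw [hβ, div_lt_one hα0]; exact hα
  have hβα : β * α = 1 := by rw [hβ]; field_simp
  have hβirr : Irrational β := by rw [hβ, one_div]; exact hirr.inv
  -- floor of α * m is at least 1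
  have hfl : ∀ m : ℕ+, 1 ≤ ⌊α * (m : ℝ)⌋ := by
    intro m
    rw [Int.le_floor]
    push_cast
    calc (1:ℝ) ≤ α := hα.le
      _ = α * 1 := (mul_one α).symm
      _ ≤ α * m := by
          have : (1:ℝ) ≤ (m:ℝ) := by exact_mod_cast m.one_le
          nlinarith
  -- the map
  set F : ℕ+ → ℕ+ := fun m => ⟨(⌊α * (m : ℝ)⌋).toNat, by
    have := hfl m; omega⟩ with hFdef
  have hFcast : ∀ m : ℕ+, ((F m : ℕ) : ℤ) = ⌊α * (m : ℝ)⌋ := by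
    intro m
    simp only [hFdef, PNat.mk_coe]
    exact Int.toNat_of_nonneg (by linarith [hfl m])
  have hFcastR : ∀ m : ℕ+, ((F m : ℕ) : ℝ) = ((⌊α * (m : ℝ)⌋ : ℤ) : ℝ) := by
    intro m; exact_mod_cast congrArg (Int.cast : ℤ → ℝ) (hFcast m)
  -- key inequalities for m : ℕ+
  have hkey : ∀ m : ℕ+, (⌊α * (m : ℝ)⌋ : ℝ) ≤ α * m ∧ α * m < ⌊α * (m : ℝ)⌋ + 1 := by
    intro m; exact ⟨Int.floor_le _, Int.lt_floor_add_one _⟩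
  -- ceiling computation at members of Beatty sequence : c (F m) = 1
  have hmem : ∀ m : ℕ+, (⌈β * ((F m : ℝ) + 1)⌉ - ⌈β * (F m : ℝ)⌉ : ℤ) = 1 := by
    intro m
    obtain ⟨h1, h2⟩ := hkey m
    set n : ℤ := ⌊α * (m : ℝ)⌋ with hn
    have hc1 : β * ((n : ℝ)) ≤ m := by
      have := mul_le_mul_of_nonneg_left h1 hβ0.le
      calc β * (n:ℝ) ≤ β * (α * m) := this
        _ = (β * α) * m := by ring
        _ = m := by rw [hβα]; ring
    have hc2 : (m : ℝ) < β * ((n : ℝ) + 1) := by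
      have := mul_lt_mul_of_pos_left h2 hβ0
      calc (m:ℝ) = (β * α) * m := by rw [hβα]; ring
        _ = β * (α * m) := by ring
        _ < β * ((n:ℝ) + 1) := this
    have hup : β * ((n : ℝ) + 1) ≤ (m : ℝ) + 1 := by nlinarith
    have hlow : (m : ℝ) - 1 < β * (n : ℝ) := by nlinarith
    have e1 : ⌈β * ((n : ℝ) + 1)⌉ = (m : ℤ) + 1 := by
      rw [Int.ceil_eq_iff]
      constructor
      · push_cast; linarith
      · push_cast; linarith
    have e2 : ⌈β * (n : ℝ)⌉ = (m : ℤ) := by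
      rw [Int.ceil_eq_iff]
      constructor
      · push_cast; linarith
      · push_cast; linarith
    rw [hFcastR m, ← hn, e1, e2]
    ring
  -- nonzero coefficient implies membership
  have hnz : ∀ n : ℕ+, (⌈β * ((n : ℝ) + 1)⌉ - ⌈β * (n : ℝ)⌉ : ℤ) ≠ 0 →
      ∃ m : ℕ+, F m = n := by
    intro n hne
    have hir : Irrational (β * (n : ℝ)) := by
      have : ((n:ℕ) : ℝ) = (n : ℝ) := by norm_cast
      rw [← this]
      exact hβirr.mul_natCast n.ne_zero
    set m : ℤ := ⌈β * (n : ℝ)⌉ with hm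
    have hmle : β * (n : ℝ) ≤ m := Int.le_ceil _
    have hmlt : β * (n : ℝ) < m := lt_of_le_of_ne hmle (by
      intro h; exact hir ⟨(m : ℚ), by exact_mod_cast h.symm⟩)
    -- ceiling difference is between 0 and 1
    have hb1 : ⌈β * ((n : ℝ) + 1)⌉ ≤ m + 1 := by
      rw [Int.ceil_le]
      push_cast
      nlinarith
    have hb0 : m ≤ ⌈β * ((n : ℝ) + 1)⌉ := by
      apply Int.ceil_le_ceil
      nlinarith
    have hc1 : ⌈β * ((n : ℝ) + 1)⌉ = m + 1 := by omega
    have hmlt2 : (m : ℝ) < β * ((n : ℝ) + 1) := by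
      by_contra h
      push_neg at h
      have : ⌈β * ((n : ℝ) + 1)⌉ ≤ m := Int.ceil_le.mpr h
      omega
    have hmpos : 0 < m := by
      have : (0:ℝ) < β * (n:ℝ) := by positivity
      exact Int.ceil_pos.mpr this
    -- show ⌊α * m⌋ = n
    have h1 : ((n : ℕ) : ℝ) < α * (m : ℝ) := by
      have := mul_lt_mul_of_pos_left hmlt hα0
      have e : α * (β * (n:ℝ)) = (n:ℝ) := by
        rw [show α * (β * (n:ℝ)) = (β * α) * (n:ℝ) by ring, hβα, one_mul]
      push_cast
      linarith [e ▸ this]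
    have h2 : α * (m : ℝ) < ((n : ℕ) : ℝ) + 1 := by
      have := mul_lt_mul_of_pos_left hmlt2 hα0
      have e : α * (β * ((n:ℝ)+1)) = (n:ℝ) + 1 := by
        rw [show α * (β * ((n:ℝ)+1)) = (β * α) * ((n:ℝ)+1) by ring, hβα, one_mul]
      push_cast
      linarith [e ▸ this]
    have hmt : (m.toNat : ℤ) = m := Int.toNat_of_nonneg hmpos.le
    have hMpos : 0 < m.toNat := by omega
    refine ⟨⟨m.toNat, hMpos⟩, ?_⟩
    set M : ℕ+ := ⟨m.toNat, hMpos⟩ with hM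
    have hMR : ((M : ℕ) : ℝ) = (m : ℝ) := by exact_mod_cast hmt
    have hfloor : ⌊α * ((M : ℕ) : ℝ)⌋ = ((n : ℕ) : ℤ) := by
      rw [hMR, Int.floor_eq_iff]
      constructor
      · push_cast; linarith
      · push_cast; linarith
    have h3 := hFcast M
    have h4 : ((F M : ℕ) : ℤ) = ((n : ℕ) : ℤ) := by
      rw [h3]; exact hfloor
    exact PNat.coe_injective (by exact_mod_cast h4)
  -- injectivity of F
  have hFinj : Function.Injective F := by
    have hmono : StrictMono fun m : ℕ+ => ⌊α * (m : ℝ)⌋ := by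
      intro a b hab
      have hab' : (a : ℝ) + 1 ≤ (b : ℝ) := by exact_mod_cast hab
      have : α * (a : ℝ) + 1 < α * (b : ℝ) := by nlinarith
      calc ⌊α * (a : ℝ)⌋ < ⌊α * (a:ℝ)⌋ + 1 := by omega
        _ ≤ ⌊α * (b : ℝ)⌋ := by
            rw [Int.le_floor]
            push_cast
            linarith [Int.floor_le (α * (a:ℝ))]
    intro a b hab
    have : ((F a : ℕ) : ℤ) = ((F b : ℕ) : ℤ) := by rw [hab]
    rw [hFcast a, hFcast b] at this
    exact hmono.injective this
  -- nonvanishing of the RHS terms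
  have hgne : ∀ m : ℕ+, ((⌊α * (m : ℝ)⌋ : ℂ)) ^ (-s) ≠ 0 := by
    intro m
    have hb : ((⌊α * (m : ℝ)⌋ : ℤ) : ℂ) ≠ 0 := by
      have := hfl m
      exact_mod_cast (by omega : (⌊α * (m : ℝ)⌋ : ℤ) ≠ 0)
    rw [Complex.cpow_def_of_ne_zero hb]
    exact Complex.exp_ne_zero _
  -- now the tsum identity
  refine tsum_eq_tsum_of_ne_zero_bij (fun m => F m.1) ?_ ?_ ?_
  · intro x y hxy
    exact Subtype.ext (hFinj hxy)
  · intro n hn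
    simp only [Function.mem_support] at hn
    have hcn : (⌈β * ((n : ℝ) + 1)⌉ - ⌈β * (n : ℝ)⌉ : ℤ) ≠ 0 := by
      intro h
      apply hn
      rw [h]
      simp
    obtain ⟨m, hm⟩ := hnz n hcn
    exact ⟨⟨m, by simp only [Function.mem_support]; exact hgne m⟩, hm⟩
  · rintro ⟨m, hm⟩
    simp only
    rw [hmem m]
    have hcast : ((F m : ℕ+) : ℂ) = ((⌊α * (m : ℝ)⌋ : ℤ) : ℂ) := by
      exact_mod_cast congrArg (Int.cast : ℤ → ℂ) (hFcast m)
    rw [Complex.cpow_neg]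
    rw [hcast]
    simp [div_eq_inv_mul]
end

section
/- Let α be a positive irrational and q a positive integer. For all s with Re(s) > 1, g_{αq}(s) = ∑_{n ∈ A_{αq}} n^{-s} satisfies g_{αq}(s) = ∑_{n>q} R(α(n-q)) n^{-s} + ∑_{n=1}^{q} R(α(n-q)) n^{-s} - J_α(s) + {αq}·ζ(s) - (1/2)q^{-s}, where J_α(s) = ∑_{n≥1} R(αn) n^{-s}. -/
/-- The odd 1-periodic sawtooth function: R(x) = {x} - 1/2 if x ∉ ℤ, R(x) = 0 if x ∈ ℤ. -/
noncomputable def sawR (x : ℝ) : ℝ := if Int.fract x = 0 then 0 else Int.fract x - 1 / 2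

lemma fract_ne_zero_of_irrational {x : ℝ} (hx : Irrational x) : Int.fract x ≠ 0 := by
  intro h
  have : x = (⌊x⌋ : ℝ) := by
    have := Int.fract_add_floor x
    rw [h] at this; linarith
  exact hx.ne_int ⌊x⌋ this

lemma sawR_of_irrational {x : ℝ} (hx : Irrational x) : sawR x = Int.fract x - 1 / 2 := by
  simp [sawR, fract_ne_zero_of_irrational hx]

lemma abs_sawR_le (x : ℝ) : |sawR x| ≤ 1 := by
  unfold sawR
  split
  · simp
  · have h1 := Int.fract_nonneg x
    have h2 := Int.fract_lt_one x
    rw [abs_le]; constructor <;> linarith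

lemma fract_sub_fract (a b : ℝ) :
    Int.fract (a - b) = Int.fract (Int.fract a - Int.fract b) := by
  have h : a - b = (Int.fract a - Int.fract b) + ((⌊a⌋ - ⌊b⌋ : ℤ) : ℝ) := by
    push_cast
    simp only [Int.fract]
    ring
  rw [h, Int.fract_add_intCast]

/-- Key pointwise real identity. -/
lemma key_real (α : ℝ) (hirr : Irrational α) (q n : ℕ) (hq : 0 < q) (hn : 0 < n) :
    (if Int.fract (α * n) < Int.fract (α * q) then (1 : ℝ) else 0)
      = sawR (α * ((n : ℝ) - q)) - sawR (α * n) + Int.fract (α * q)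
        - (if n = q then (1 : ℝ) / 2 else 0) := by
  have hin : Irrational (α * n) := by
    have := hirr.natCast_mul hn.ne'
    rwa [mul_comm] at this
  have hiq : Irrational (α * q) := by
    have := hirr.natCast_mul hq.ne'
    rwa [mul_comm] at this
  have hsn : sawR (α * n) = Int.fract (α * n) - 1 / 2 := sawR_of_irrational hin
  by_cases hnq : n = q
  · subst hnq
    have h0 : α * ((n : ℝ) - n) = 0 := by ring
    rw [if_neg (lt_irrefl _), if_pos rfl, h0]
    have hsz : sawR 0 = 0 := by simp [sawR]
    rw [hsz, hsn]; ring
  · have hz : ((n : ℤ) - q) ≠ 0 := by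
      intro h
      apply hnq
      exact_mod_cast sub_eq_zero.mp h
    have hind : Irrational (α * ((n : ℝ) - q)) := by
      have := hirr.intCast_mul hz
      have h2 : ((((n : ℤ) - q) : ℤ) : ℝ) * α = α * ((n : ℝ) - q) := by push_cast; ring
      rwa [h2] at this
    have hsd : sawR (α * ((n : ℝ) - q)) = Int.fract (α * ((n : ℝ) - q)) - 1 / 2 :=
      sawR_of_irrational hind
    have hfd : Int.fract (α * ((n : ℝ) - q))
        = Int.fract (Int.fract (α * n) - Int.fract (α * q)) := by
      have : α * ((n : ℝ) - q) = α * n - α * q := by ring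
      rw [this, fract_sub_fract]
    have hne : Int.fract (α * n) ≠ Int.fract (α * q) := by
      intro h
      have h0 : Int.fract (Int.fract (α * n) - Int.fract (α * q)) = 0 := by
        rw [h]; simp
      rw [← hfd] at h0
      exact fract_ne_zero_of_irrational hind h0
    have h1n := Int.fract_nonneg (α * n)
    have h2n := Int.fract_lt_one (α * n)
    have h1q := Int.fract_nonneg (α * q)
    have h2q := Int.fract_lt_one (α * q)
    by_cases hlt : Int.fract (α * n) < Int.fract (α * q)
    · have hval : Int.fract (Int.fract (α * n) - Int.fract (α * q))
          = Int.fract (α * n) - Int.fract (α * q) + 1 := by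
        have : Int.fract (α * n) - Int.fract (α * q)
            = (Int.fract (α * n) - Int.fract (α * q) + 1) + ((-1 : ℤ) : ℝ) := by
          push_cast; ring
        rw [this, Int.fract_add_intCast, Int.fract_eq_self.mpr ⟨by linarith, by linarith⟩]
        push_cast
        ring
      simp only [if_pos hlt, if_neg hnq, hsd, hfd, hsn, hval]
      ring
    · have hgt : Int.fract (α * q) < Int.fract (α * n) := lt_of_le_of_ne (not_lt.mp hlt) hne.symm
      have hval : Int.fract (Int.fract (α * n) - Int.fract (α * q))
          = Int.fract (α * n) - Int.fract (α * q) :=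
        Int.fract_eq_self.mpr ⟨by linarith, by linarith⟩
      simp only [if_neg hlt, if_neg hnq, hsd, hfd, hsn, hval]
      ring

open Classical in
theorem stmt_9 (α : ℝ) (hα : 0 < α) (hirr : Irrational α) (q : ℕ) (hq : 0 < q)
    (s : ℂ) (hs : 1 < s.re) :
    ∑' n : ℕ+, (if Int.fract (α * n) < Int.fract (α * q) then (n : ℂ) ^ (-s) else 0)
      = (∑' m : ℕ, (sawR (α * (((q + 1 + m : ℕ) : ℝ) - q)) : ℂ) * ((q + 1 + m : ℕ) : ℂ) ^ (-s))
        + (∑ n ∈ Finset.Icc 1 q, (sawR (α * ((n : ℝ) - q)) : ℂ) * (n : ℂ) ^ (-s))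
        - (∑' n : ℕ+, (sawR (α * (n : ℝ)) : ℂ) * (n : ℂ) ^ (-s))
        + ((Int.fract (α * q) : ℝ) : ℂ) * riemannZeta s
        - (1 / 2) * (q : ℂ) ^ (-s) := by
  have hs0 : s ≠ 0 := by
    intro h; rw [h] at hs; norm_num at hs
  have hzero : (0 : ℂ) ^ (-s) = 0 := by
    rw [Complex.zero_cpow (neg_ne_zero.mpr hs0)]
  -- norm of terms
  have hnorm : ∀ n : ℕ, ‖(n : ℂ) ^ (-s)‖ ≤ 1 / (n : ℝ) ^ s.re := by
    intro n
    rcases Nat.eq_zero_or_pos n with h | h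
    · subst h
      simp only [Nat.cast_zero, hzero, norm_zero]
      rw [Real.zero_rpow (ne_of_gt (by linarith))]
      simp
    · have hp : (0 : ℝ) < (n : ℝ) := by exact_mod_cast h
      rw [show ((n : ℂ)) = ((n : ℝ) : ℂ) by norm_num,
        Complex.norm_cpow_eq_rpow_re_of_pos hp,
        Complex.neg_re, Real.rpow_neg hp.le, one_div]
  have hbase : Summable (fun n : ℕ => ‖(n : ℂ) ^ (-s)‖) := by
    apply Summable.of_nonneg_of_le (fun n => norm_nonneg _) hnorm
    exact (Real.summable_one_div_nat_rpow.mpr hs)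
  have hsummand : ∀ (c : ℕ → ℝ), (∀ n, |c n| ≤ 1) →
      Summable (fun n : ℕ => (c n : ℂ) * (n : ℂ) ^ (-s)) := by
    intro c hc
    apply Summable.of_norm_bounded hbase
    intro n
    rw [norm_mul]
    calc ‖((c n : ℝ) : ℂ)‖ * ‖(n : ℂ) ^ (-s)‖
        ≤ 1 * ‖(n : ℂ) ^ (-s)‖ := by
          apply mul_le_mul_of_nonneg_right _ (norm_nonneg _)
          rw [Complex.norm_real]; exact hc n
      _ = ‖(n : ℂ) ^ (-s)‖ := one_mul _
  -- the four series over ℕ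
  set A : ℕ → ℂ := fun n => (sawR (α * ((n : ℝ) - q)) : ℂ) * (n : ℂ) ^ (-s) with hA
  set B : ℕ → ℂ := fun n => (sawR (α * (n : ℝ)) : ℂ) * (n : ℂ) ^ (-s) with hB
  set C : ℕ → ℂ := fun n => ((Int.fract (α * q) : ℝ) : ℂ) * (n : ℂ) ^ (-s) with hC
  set D : ℕ → ℂ := fun n => if n = q then (1 / 2 : ℂ) * (n : ℂ) ^ (-s) else 0 with hD
  have hAs : Summable A := hsummand _ (fun n => abs_sawR_le _)
  have hBs : Summable B := hsummand _ (fun n => abs_sawR_le _)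
  have hCs : Summable C := by
    apply hsummand
    intro n
    rw [abs_of_nonneg (Int.fract_nonneg _)]
    exact (Int.fract_lt_one _).le
  have hDs : Summable D := by
    apply summable_of_ne_finset_zero (s := {q})
    intro n hn
    simp only [hD, Finset.mem_singleton] at hn ⊢
    rw [if_neg hn]
  -- pointwise identity over ℕ
  have hG : ∀ n : ℕ,
      (if Int.fract (α * n) < Int.fract (α * q) then (n : ℂ) ^ (-s) else 0)
        = A n - B n + C n - D n := by
    intro n
    rcases Nat.eq_zero_or_pos n with h | h
    · subst h
      simp [hA, hB, hC, hD, hzero, (by omega : ¬ (0 : ℕ) = q)]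
    · have key := key_real α hirr q n hq h
      have : ((if Int.fract (α * n) < Int.fract (α * q) then (1 : ℝ) else 0 : ℝ) : ℂ)
          * (n : ℂ) ^ (-s) = A n - B n + C n - D n := by
        rw [key]
        push_cast
        simp only [hA, hB, hC, hD]
        by_cases hnq : n = q <;> simp [hnq] <;> ring
      rw [← this]
      by_cases hlt : Int.fract (α * n) < Int.fract (α * q) <;> simp [hlt]
  -- convert LHS from ℕ+ to ℕ
  have hrange : ∀ (f : ℕ → ℂ), f 0 = 0 → ∑' n : ℕ+, f n = ∑' n : ℕ, f n := by
    intro f hf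
    apply Function.Injective.tsum_eq (fun a b h => PNat.coe_injective h)
    intro n hn
    rcases Nat.eq_zero_or_pos n with h | h
    · exact absurd (by rw [h]; exact hf) hn
    · exact ⟨⟨n, h⟩, rfl⟩
  -- evaluate the four sums
  have hCval : ∑' n : ℕ, C n = ((Int.fract (α * q) : ℝ) : ℂ) * riemannZeta s := by
    rw [hC, tsum_mul_left]
    congr 1
    rw [zeta_eq_tsum_one_div_nat_cpow hs]
    exact tsum_congr fun n => by rw [Complex.cpow_neg, one_div]
  have hDval : ∑' n : ℕ, D n = (1 / 2 : ℂ) * (q : ℂ) ^ (-s) := by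
    have h1 : ∀ n : ℕ, D n = if n = q then (1 / 2 : ℂ) * (q : ℂ) ^ (-s) else 0 := by
      intro n
      by_cases h : n = q <;> simp [hD, h]
    rw [tsum_congr h1, tsum_ite_eq]
  have hBval : (∑' n : ℕ+, (sawR (α * (n : ℝ)) : ℂ) * (n : ℂ) ^ (-s)) = ∑' n : ℕ, B n := by
    rw [← hrange B (by simp [hB, hzero])]
  have hAval : ∑' n : ℕ, A n
      = (∑ n ∈ Finset.Icc 1 q, A n)
        + ∑' m : ℕ, (sawR (α * (((q + 1 + m : ℕ) : ℝ) - q)) : ℂ) * ((q + 1 + m : ℕ) : ℂ) ^ (-s) := by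
    rw [← Summable.sum_add_tsum_nat_add (q + 1) hAs]
    congr 1
    · symm
      apply Finset.sum_subset
      · intro x hx
        simp only [Finset.mem_Icc] at hx
        simp only [Finset.mem_range]
        omega
      · intro x hx hnx
        simp only [Finset.mem_range] at hx
        simp only [Finset.mem_Icc] at hnx
        have : x = 0 := by omega
        subst this
        simp [hA, hzero]
    · refine tsum_congr fun m => ?_
      rw [Nat.add_comm m (q + 1)]
  -- put it together
  have hLHS : (∑' n : ℕ+, (if Int.fract (α * n) < Int.fract (α * q)
        then ((n : ℕ) : ℂ) ^ (-s) else 0))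
      = ∑' n : ℕ, (A n - B n + C n - D n) := by
    rw [hrange (fun n : ℕ => if Int.fract (α * n) < Int.fract (α * q)
        then ((n : ℕ) : ℂ) ^ (-s) else 0) (by simp [hzero])]
    exact tsum_congr hG
  rw [hLHS, Summable.tsum_sub (((hAs.sub hBs).add hCs)) hDs, Summable.tsum_add (hAs.sub hBs) hCs,
    Summable.tsum_sub hAs hBs, hCval, hDval, hBval, hAval]
  ring
end

section
/- Let α > 1 be irrational and β = 1/α. For all s with Re(s) > 1, the Beatty zeta function satisfies ζ_α(s) = ζ(s) - g_{-β}(s), where g_{-β}(s) = ∑_{n : {βn} < 1-{β}} n^{-s}. -/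
open Classical in
theorem stmt_11 (α : ℝ) (hα : 1 < α) (hirr : Irrational α) (β : ℝ) (hβ : β = 1 / α)
    (s : ℂ) (hs : 1 < s.re) :
    ∑' n : ℕ+, ((⌊α * n⌋ : ℂ)) ^ (-s)
      = riemannZeta s
        - ∑' n : ℕ+, (if Int.fract (β * n) < 1 - Int.fract β then (n : ℂ) ^ (-s) else 0) := by
  have hα0 : (0:ℝ) < α := lt_trans one_pos hα
  have hβ0 : 0 < β := by rw [hβ]; positivity
  have hβ1 : β < 1 := by rw [hβ]; rw [div_lt_one hα0]; exact hα
  have hfβ : Int.fract β = β := Int.fract_eq_self.mpr ⟨le_of_lt hβ0, hβ1⟩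
  have hβα : β * α = 1 := by rw [hβ, one_div, inv_mul_cancel₀ hα0.ne']
  have hβirr : Irrational β := by
    rw [hβ, one_div]; exact hirr.inv
  -- irrationality of β * m for m : ℕ+ etc.
  have hirrm : ∀ m : ℕ+, Irrational (β * (m:ℝ)) := by
    intro m
    rw [mul_comm]
    exact hβirr.natCast_mul (by exact_mod_cast m.ne_zero)
  -- no equality case
  have hne : ∀ m : ℕ+, Int.fract (β * (m:ℝ)) ≠ 1 - β := by
    intro m h
    have h2 : β * ((m:ℝ) + 1) = (⌊β * (m:ℝ)⌋ : ℝ) + 1 := by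
      have := Int.self_sub_floor (β * (m:ℝ))
      rw [h] at this
      nlinarith [this]
    have : Irrational (β * ((m:ℝ) + 1)) := by
      have : ((m:ℝ) + 1) = ((m + 1 : ℕ) : ℝ) := by push_cast; ring
      rw [this, mul_comm]
      exact hβirr.natCast_mul (by omega)
    rw [h2] at this
    exact this ⟨(⌊β * (m:ℝ)⌋ : ℚ) + 1, by push_cast; ring⟩
  -- the Beatty map
  have hfloor_pos : ∀ n : ℕ+, 0 < ⌊α * (n:ℝ)⌋ := by
    intro n
    have h1 : (1:ℝ) ≤ α * (n:ℝ) := by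
      have : (1:ℝ) ≤ (n:ℝ) := by exact_mod_cast n.one_le
      nlinarith
    have := Int.le_floor.mpr (by exact_mod_cast h1 : ((1:ℤ):ℝ) ≤ α * (n:ℝ))
    omega
  set i : ℕ+ → ℕ+ := fun n => ⟨(⌊α * (n:ℝ)⌋).toNat, by
    have := hfloor_pos n; omega⟩ with hi_def
  have hi_cast : ∀ n : ℕ+, ((i n : ℕ+) : ℝ) = (⌊α * (n:ℝ)⌋ : ℝ) := by
    intro n
    have h := hfloor_pos n
    show ((((⌊α * (n:ℝ)⌋).toNat : ℕ)) : ℝ) = _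
    exact_mod_cast Int.toNat_of_nonneg (by omega : (0:ℤ) ≤ ⌊α * (n:ℝ)⌋)
  have hi_inj : Function.Injective i := by
    have hmono : StrictMono i := by
      intro a b hab
      have hab' : (a:ℝ) + 1 ≤ (b:ℝ) := by exact_mod_cast hab
      have h1 : α * (a:ℝ) + 1 ≤ α * (b:ℝ) := by nlinarith
      have h2 : ⌊α * (a:ℝ)⌋ + 1 ≤ ⌊α * (b:ℝ)⌋ := by
        have := Int.floor_le_floor h1
        rw [Int.floor_add_one] at this
        omega
      rw [← PNat.coe_lt_coe]
      show (⌊α * (a:ℝ)⌋).toNat < (⌊α * (b:ℝ)⌋).toNat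
      have := hfloor_pos a
      omega
    exact hmono.injective
  -- irrationality of α * n
  have hirran : ∀ n : ℕ+, Irrational (α * (n:ℝ)) := by
    intro n
    rw [mul_comm]
    exact hirr.natCast_mul (by exact_mod_cast n.ne_zero)
  -- membership: for m = i n, the fract condition fails
  have hmem : ∀ n : ℕ+, 1 - β < Int.fract (β * ((i n : ℕ+) : ℝ)) := by
    intro n
    set m : ℝ := ((i n : ℕ+) : ℝ) with hm
    have hmfl : m = (⌊α * (n:ℝ)⌋ : ℝ) := hi_cast n
    have h1 : m < α * (n:ℝ) := by
      rw [hmfl]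
      exact lt_of_le_of_ne (Int.floor_le _) (fun h => (hirran n) (h ▸ ⟨(⌊α * (n:ℝ)⌋ : ℚ), by push_cast; ring⟩))
    have h2 : α * (n:ℝ) < m + 1 := by rw [hmfl]; exact Int.lt_floor_add_one _
    have h3 : β * m < (n:ℝ) := by nlinarith
    have h4 : (n:ℝ) < β * m + β := by nlinarith
    have hfl : ⌊β * m⌋ = (n:ℤ) - 1 := by
      apply Int.floor_eq_iff.mpr
      constructor
      · push_cast; nlinarith
      · push_cast; nlinarith
    have := Int.self_sub_floor (β * m)
    rw [hfl] at this
    push_cast at this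
    nlinarith
  -- converse: if fract condition fails at m, then m is in the range of i
  have hsurj : ∀ m : ℕ+, ¬ (Int.fract (β * (m:ℝ)) < 1 - β) → ∃ n : ℕ+, i n = m := by
    intro m hcond
    have hgt : 1 - β < Int.fract (β * (m:ℝ)) :=
      lt_of_le_of_ne (not_lt.mp hcond) (Ne.symm (hne m))
    have hfr1 : Int.fract (β * (m:ℝ)) < 1 := Int.fract_lt_one _
    have hfr := Int.self_sub_floor (β * (m:ℝ))
    have hbm0 : 0 < β * (m:ℝ) := by
      have : (0:ℝ) < (m:ℝ) := by exact_mod_cast m.pos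
      positivity
    have hfl0 : 0 ≤ ⌊β * (m:ℝ)⌋ := Int.floor_nonneg.mpr (le_of_lt hbm0)
    refine ⟨⟨(⌊β * (m:ℝ)⌋ + 1).toNat, by omega⟩, ?_⟩
    set n : ℕ+ := ⟨(⌊β * (m:ℝ)⌋ + 1).toNat, by omega⟩ with hn
    have hncast : (n:ℝ) = (⌊β * (m:ℝ)⌋ : ℝ) + 1 := by
      show ((((⌊β * (m:ℝ)⌋ + 1).toNat : ℕ)) : ℝ) = _
      exact_mod_cast Int.toNat_of_nonneg (by omega : (0:ℤ) ≤ ⌊β * (m:ℝ)⌋ + 1)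
    have h1 : β * (m:ℝ) < (n:ℝ) := by rw [hncast]; nlinarith
    have h2 : (n:ℝ) < β * (m:ℝ) + β := by rw [hncast]; nlinarith
    have h3 : (m:ℝ) < α * (n:ℝ) := by nlinarith
    have h4 : α * (n:ℝ) < (m:ℝ) + 1 := by nlinarith
    have hfl : ⌊α * (n:ℝ)⌋ = ((m:ℕ):ℤ) := by
      apply Int.floor_eq_iff.mpr
      constructor
      · push_cast; linarith
      · push_cast; linarith
    apply PNat.coe_injective
    show (⌊α * (n:ℝ)⌋).toNat = (m:ℕ)
    omega
  -- summability
  have hsumnat : Summable (fun n : ℕ => 1 / (n:ℂ) ^ s) :=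
    Complex.summable_one_div_nat_cpow.mpr hs
  have hsum : Summable (fun m : ℕ+ => ((m:ℕ):ℂ) ^ (-s)) := by
    have h1 : Summable (fun m : ℕ+ => 1 / ((m:ℕ):ℂ) ^ s) :=
      hsumnat.comp_injective (fun a b hab => by exact_mod_cast PNat.coe_injective hab)
    refine h1.congr (fun m => ?_)
    rw [Complex.cpow_neg, one_div]
  set F : ℕ+ → ℂ := fun m =>
    if Int.fract (β * (m:ℝ)) < 1 - β then 0 else ((m:ℕ):ℂ) ^ (-s) with hF_def
  set G : ℕ+ → ℂ := fun m =>
    if Int.fract (β * (m:ℝ)) < 1 - Int.fract β then ((m:ℕ):ℂ) ^ (-s) else 0 with hG_def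
  have hFind : F = Set.indicator {m : ℕ+ | ¬ Int.fract (β * (m:ℝ)) < 1 - β}
      (fun m => ((m:ℕ):ℂ) ^ (-s)) := by
    funext m
    rw [Set.indicator_apply]
    simp only [Set.mem_setOf_eq, hF_def]
    split_ifs with h1 h2 h2 <;> first | rfl | (exfalso; tauto)
  have hGind : G = Set.indicator {m : ℕ+ | Int.fract (β * (m:ℝ)) < 1 - Int.fract β}
      (fun m => ((m:ℕ):ℂ) ^ (-s)) := by
    funext m
    rw [Set.indicator_apply]
    simp only [Set.mem_setOf_eq, hG_def]
  have hFsum : Summable F := by rw [hFind]; exact hsum.indicator _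
  have hGsum : Summable G := by rw [hGind]; exact hsum.indicator _
  -- F + G sums to zeta
  have hzeta : riemannZeta s = ∑' m : ℕ+, (F m + G m) := by
    have hFG : ∀ m : ℕ+, F m + G m = ((m:ℕ):ℂ) ^ (-s) := by
      intro m
      simp only [hF_def, hG_def, hfβ]
      split_ifs with h <;> ring
    rw [tsum_congr hFG]
    rw [zeta_eq_tsum_one_div_nat_add_one_cpow hs]
    rw [← Equiv.pnatEquivNat.symm.tsum_eq (fun m : ℕ+ => ((m:ℕ):ℂ) ^ (-s))]
    apply tsum_congr
    intro n
    have : ((Equiv.pnatEquivNat.symm n : ℕ+) : ℕ) = n + 1 := rfl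
    rw [this, Complex.cpow_neg, one_div]
    push_cast
    ring_nf
  -- LHS equals tsum of F
  have hLHS : ∑' n : ℕ+, ((⌊α * (n:ℝ)⌋ : ℂ)) ^ (-s) = ∑' m : ℕ+, F m := by
    rw [← hi_inj.tsum_eq (f := F)]
    · apply tsum_congr
      intro n
      have hcond : ¬ Int.fract (β * ((i n : ℕ+):ℝ)) < 1 - β := not_lt.mpr (le_of_lt (hmem n))
      simp only [hF_def, if_neg hcond]
      congr 1
      have := hi_cast n
      push_cast at this ⊢
      exact_mod_cast this.symm
    · intro m hm
      rw [Function.mem_support] at hm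
      by_contra hrange
      apply hm
      simp only [hF_def]
      rw [if_pos]
      by_contra hcond
      obtain ⟨n, hn⟩ := hsurj m hcond
      exact hrange ⟨n, hn⟩
  rw [hLHS, hzeta, Summable.tsum_add hFsum hGsum]
  have : ∑' (n : ℕ+), (if Int.fract (β * (n:ℝ)) < 1 - Int.fract β then ((n:ℕ):ℂ) ^ (-s) else 0)
      = ∑' m, G m := rfl
  rw [this]
  ring
end

section
/- Let α = p/q with p, q coprime positive integers and p ≥ q. Then for all s with Re(s) > 1, the Beatty zeta function satisfies ζ_α(s) = p^{-s} ∑_{ℓ=1}^{q} ζ(s; ⌊ℓp/q⌋/p), where ζ(s;γ) is the Hurwitz zeta function. -/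
/-- The Hurwitz zeta series ∑_{n≥0} (n+γ)^{-s}, convergent for Re(s) > 1. -/
noncomputable def hurwitzSum (s : ℂ) (γ : ℝ) : ℂ := ∑' n : ℕ, ((n : ℂ) + γ) ^ (-s)

lemma summable_hurwitz (s : ℂ) (hs : 1 < s.re) (γ : ℝ) (hγ : 0 < γ) :
    Summable fun n : ℕ => ((n : ℂ) + γ) ^ (-s) := by
  apply Summable.of_norm
  have h : ∀ n : ℕ, ‖((n : ℂ) + γ) ^ (-s)‖ = 1 / |(n : ℝ) + γ| ^ s.re := by
    intro n
    have hpos : (0:ℝ) < (n : ℝ) + γ := by positivity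
    rw [show ((n:ℂ) + γ) = (((n:ℝ) + γ : ℝ) : ℂ) by push_cast; ring,
      Complex.norm_cpow_eq_rpow_re_of_pos hpos, Complex.neg_re,
      Real.rpow_neg hpos.le, abs_of_pos hpos, one_div]
  simp_rw [h]
  exact (Real.summable_one_div_nat_add_rpow γ s.re).2 hs

/-- The equivalence `Fin q × ℕ ≃ ℕ+`, `(j, m) ↦ m*q + j + 1`. -/
def finProdEquivPNat (q : ℕ) (hq : 0 < q) : Fin q × ℕ ≃ ℕ+ where
  toFun x := ⟨x.2 * q + x.1 + 1, by positivity⟩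
  invFun n := (⟨(n - 1) % q, Nat.mod_lt _ hq⟩, (n - 1) / q)
  left_inv := by
    rintro ⟨⟨j, hj⟩, m⟩
    rw [Prod.mk.injEq]
    refine ⟨Fin.ext ?_, ?_⟩
    · show (m * q + j + 1 - 1) % q = j
      rw [show m * q + j + 1 - 1 = j + m * q from by omega,
        Nat.add_mul_mod_self_right, Nat.mod_eq_of_lt hj]
    · show (m * q + j + 1 - 1) / q = m
      rw [show m * q + j + 1 - 1 = j + m * q from by omega,
        Nat.add_mul_div_right _ _ hq, Nat.div_eq_of_lt hj, Nat.zero_add]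
  right_inv := by
    rintro ⟨n, hn⟩
    have h2 : (n - 1) / q * q + (n - 1) % q = n - 1 := by rw [Nat.mul_comm]; exact Nat.div_add_mod (n - 1) q
    apply Subtype.ext
    show (n - 1) / q * q + (n - 1) % q + 1 = n
    rw [h2]
    omega

lemma floor_ge_one {p q ℓ : ℕ} (hq : 0 < q) (hpq : q ≤ p) (hℓ : 1 ≤ ℓ) :
    1 ≤ ⌊((ℓ : ℝ) * p) / q⌋ := by
  rw [Int.le_floor]
  push_cast
  rw [le_div_iff₀ (by positivity : (0:ℝ) < q)]
  have h1 : (1:ℝ) ≤ ℓ := by exact_mod_cast hℓ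
  have h2 : (q:ℝ) ≤ p := by exact_mod_cast hpq
  have h3 : (0:ℝ) < q := by positivity
  nlinarith

theorem stmt_12 (p q : ℕ) (hp : 0 < p) (hq : 0 < q) (hcop : Nat.Coprime p q) (hpq : q ≤ p)
    (α : ℝ) (hα : α = (p : ℝ) / q) (s : ℂ) (hs : 1 < s.re) :
    ∑' n : ℕ+, ((⌊α * n⌋ : ℂ)) ^ (-s)
      = (p : ℂ) ^ (-s) *
          ∑ ℓ ∈ Finset.Icc 1 q, hurwitzSum s ((⌊((ℓ : ℝ) * p) / q⌋ : ℝ) / p) := by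
  set γ : ℕ → ℝ := fun ℓ => (⌊((ℓ : ℝ) * p) / q⌋ : ℝ) / p with hγdef
  have hq0 : (q : ℝ) ≠ 0 := by positivity
  have hp0 : (p : ℝ) ≠ 0 := by positivity
  have hγpos : ∀ ℓ : ℕ, 1 ≤ ℓ → 0 < γ ℓ := by
    intro ℓ hℓ
    have := floor_ge_one (p := p) hq hpq hℓ
    have h1 : (1 : ℝ) ≤ (⌊((ℓ : ℝ) * p) / q⌋ : ℝ) := by exact_mod_cast this
    have : (0:ℝ) < p := by positivity
    exact div_pos (by linarith) this
  -- key pointwise identity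
  have hkey : ∀ (j : Fin q) (m : ℕ),
      ((⌊α * ((finProdEquivPNat q hq) (j, m) : ℕ)⌋ : ℂ)) ^ (-s)
        = (p : ℂ) ^ (-s) * ((m : ℂ) + (γ ((j : ℕ) + 1) : ℝ)) ^ (-s) := by
    intro j m
    set ℓ : ℕ := (j : ℕ) + 1 with hℓdef
    have hℓ1 : 1 ≤ ℓ := Nat.le_add_left 1 _
    have hcoe : ((finProdEquivPNat q hq) (j, m) : ℕ) = m * q + ℓ := by
      show m * q + (j:ℕ) + 1 = m * q + ℓ; omega
    set r : ℤ := ⌊((ℓ : ℝ) * p) / q⌋ with hrdef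
    have hr1 : 1 ≤ r := floor_ge_one hq hpq hℓ1
    have hfloor : ⌊α * ((finProdEquivPNat q hq) (j, m) : ℕ)⌋ = r + m * p := by
      rw [hcoe, hα]
      have heq : (p : ℝ) / q * ((m * q + ℓ : ℕ) : ℝ) = ((ℓ : ℝ) * p) / q + ((m * p : ℤ) : ℝ) := by
        push_cast
        field_simp
        ring
      rw [heq, Int.floor_add_intCast]
    rw [hfloor]
    have hpC : (p : ℂ) ≠ 0 := Nat.cast_ne_zero.mpr hp.ne'
    have hcast : ((r + m * p : ℤ) : ℂ) = (((p : ℝ) * ((m : ℝ) + (r : ℝ) / p) : ℝ) : ℂ) := by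
      push_cast
      field_simp
      ring
    rw [hcast, Complex.ofReal_mul, Complex.mul_cpow_ofReal_nonneg (by positivity)
      (by positivity : (0:ℝ) ≤ (m : ℝ) + (r : ℝ) / p)]
    have h2 : ((((m : ℝ) + (r : ℝ) / p) : ℝ) : ℂ) = (m : ℂ) + ((γ ℓ : ℝ) : ℂ) := by
      simp only [hγdef]
      rw [← hrdef]
      push_cast
      ring
    rw [h2]
    norm_num
  -- reindex the tsum
  rw [← ((finProdEquivPNat q hq).tsum_eq (fun n : ℕ+ => ((⌊α * n⌋ : ℂ)) ^ (-s)))]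
  have hrw : (fun x : Fin q × ℕ => ((⌊α * ((finProdEquivPNat q hq) x : ℕ)⌋ : ℂ)) ^ (-s))
      = fun x : Fin q × ℕ => (p : ℂ) ^ (-s) * (((x.2 : ℂ)) + (γ ((x.1 : ℕ) + 1) : ℝ)) ^ (-s) := by
    funext x
    exact hkey x.1 x.2
  rw [hrw]
  -- summability
  have hslice : ∀ j : Fin q, Summable fun m : ℕ => ((m : ℂ) + (γ ((j : ℕ) + 1) : ℝ)) ^ (-s) :=
    fun j => summable_hurwitz s hs _ (hγpos _ (Nat.le_add_left 1 _))
  have hsumF : Summable fun x : Fin q × ℕ => (((x.2 : ℂ)) + (γ ((x.1 : ℕ) + 1) : ℝ)) ^ (-s) := by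
    apply Summable.of_norm
    rw [summable_prod_of_nonneg (fun x => norm_nonneg _)]
    exact ⟨fun j => (hslice j).norm, Summable.of_finite⟩
  have hsumF' : Summable fun x : Fin q × ℕ =>
      (p : ℂ) ^ (-s) * (((x.2 : ℂ)) + (γ ((x.1 : ℕ) + 1) : ℝ)) ^ (-s) := hsumF.mul_left _
  rw [Summable.tsum_prod hsumF']
  simp only [tsum_fintype]
  rw [Finset.mul_sum]
  have hterm : ∀ j : Fin q,
      (∑' m : ℕ, (p : ℂ) ^ (-s) * (((m : ℂ)) + (γ ((j : ℕ) + 1) : ℝ)) ^ (-s))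
        = (p : ℂ) ^ (-s) * hurwitzSum s (γ ((j : ℕ) + 1)) := by
    intro j
    rw [tsum_mul_left]
    rfl
  rw [Finset.sum_congr rfl (fun j _ => hterm j)]
  rw [show Finset.Icc 1 q = Finset.Ico 1 (q + 1) from (Finset.Ico_add_one_right_eq_Icc 1 q).symm,
    Finset.sum_Ico_eq_sum_range]
  rw [Fin.sum_univ_eq_sum_range (fun i => (p : ℂ) ^ (-s) * hurwitzSum s (γ (i + 1))) q]
  apply Finset.sum_congr (by norm_num)
  intro i _
  rw [Nat.add_comm 1 i]
end

section
/- Let 0 < α < 1 be irrational and β = 1/α. Then for all s with Re(s) > 1, the Sturmian Dirichlet series satisfies S_α(s) = ⌊β⌋·ζ(s) + S_{1/{β}}(s), where {β} denotes the fractional part of β. -/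
theorem stmt_14 (α : ℝ) (hα : α ∈ Set.Ioo (0 : ℝ) 1) (hirr : Irrational α)
    (β : ℝ) (hβ : β = 1 / α) (s : ℂ) (hs : 1 < s.re) :
    ∑' n : ℕ+, ((⌈β * (n : ℝ)⌉ - ⌈β * ((n : ℝ) - 1)⌉ : ℤ) : ℂ) / (n : ℂ) ^ s
      = (⌊β⌋ : ℂ) * riemannZeta s
        + ∑' n : ℕ+,
            ((⌈Int.fract β * (n : ℝ)⌉ - ⌈Int.fract β * ((n : ℝ) - 1)⌉ : ℤ) : ℂ) / (n : ℂ) ^ s := by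
  set γ := Int.fract β with hγ
  have hγ0 : 0 ≤ γ := Int.fract_nonneg β
  have hγ1 : γ ≤ 1 := (Int.fract_lt_one β).le
  -- pointwise identity
  have key : ∀ n : ℕ+, (⌈β * (n : ℝ)⌉ - ⌈β * ((n : ℝ) - 1)⌉ : ℤ)
      = ⌊β⌋ + (⌈γ * (n : ℝ)⌉ - ⌈γ * ((n : ℝ) - 1)⌉) := by
    intro n
    have h1 : β * (n : ℝ) = γ * (n : ℝ) + ((⌊β⌋ * (n : ℕ) : ℤ) : ℝ) := by
      push_cast
      rw [hγ, Int.fract]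
      ring
    have h2 : β * ((n : ℝ) - 1) = γ * ((n : ℝ) - 1) + ((⌊β⌋ * ((n : ℕ) - 1) : ℤ) : ℝ) := by
      have : (1 : ℕ) ≤ (n : ℕ) := n.one_le
      push_cast [this]
      rw [hγ, Int.fract]
      ring
    rw [h1, h2, Int.ceil_add_intCast, Int.ceil_add_intCast]
    have : (1 : ℕ) ≤ (n : ℕ) := n.one_le
    push_cast [this]
    ring
  -- bound on the fractional term
  have cb : ∀ n : ℕ+, |((⌈γ * (n : ℝ)⌉ - ⌈γ * ((n : ℝ) - 1)⌉ : ℤ) : ℝ)| ≤ 1 := by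
    intro n
    have hle : γ * ((n : ℝ) - 1) ≤ γ * (n : ℝ) := by nlinarith
    have h0 : (0 : ℤ) ≤ ⌈γ * (n : ℝ)⌉ - ⌈γ * ((n : ℝ) - 1)⌉ :=
      sub_nonneg.mpr (Int.ceil_le_ceil hle)
    have h1 : ⌈γ * (n : ℝ)⌉ ≤ ⌈γ * ((n : ℝ) - 1)⌉ + 1 := by
      have : γ * (n : ℝ) = γ * ((n : ℝ) - 1) + γ := by ring
      rw [this]
      calc ⌈γ * ((n : ℝ) - 1) + γ⌉ ≤ ⌈γ * ((n : ℝ) - 1)⌉ + ⌈γ⌉ := Int.ceil_add_le _ _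
        _ ≤ ⌈γ * ((n : ℝ) - 1)⌉ + 1 := by
            have : ⌈γ⌉ ≤ 1 := Int.ceil_le.mpr (by exact_mod_cast hγ1)
            omega
    rw [abs_le]
    refine ⟨?_, ?_⟩
    · exact_mod_cast (by omega : (-1 : ℤ) ≤ ⌈γ * (n : ℝ)⌉ - ⌈γ * ((n : ℝ) - 1)⌉)
    · exact_mod_cast (by omega : (⌈γ * (n : ℝ)⌉ - ⌈γ * ((n : ℝ) - 1)⌉ : ℤ) ≤ 1)
  -- summability
  have hsum0 : Summable (fun n : ℕ => 1 / (n : ℂ) ^ s) :=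
    Complex.summable_one_div_nat_cpow.mpr hs
  have hsum : Summable (fun n : ℕ+ => 1 / (n : ℂ) ^ s) :=
    hsum0.comp_injective (fun a b h => PNat.coe_injective h)
  have hsumc : Summable (fun n : ℕ+ =>
      ((⌈γ * (n : ℝ)⌉ - ⌈γ * ((n : ℝ) - 1)⌉ : ℤ) : ℂ) / (n : ℂ) ^ s) := by
    apply Summable.of_norm_bounded hsum.norm
    intro n
    rw [norm_div, norm_div, norm_one]
    gcongr
    rw [Complex.norm_intCast]
    exact cb n
  have hsumf : Summable (fun n : ℕ+ => (⌊β⌋ : ℂ) / (n : ℂ) ^ s) := by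
    simpa [mul_one_div, div_eq_mul_inv] using hsum.mul_left (⌊β⌋ : ℂ)
  -- zeta as pnat sum
  have hzeta : ∑' n : ℕ+, 1 / (n : ℂ) ^ s = riemannZeta s := by
    rw [zeta_eq_tsum_one_div_nat_add_one_cpow hs, ← Equiv.pnatEquivNat.symm.tsum_eq]
    congr 1
    funext m
    simp [Equiv.pnatEquivNat, Nat.succPNat]
  calc ∑' n : ℕ+, ((⌈β * (n : ℝ)⌉ - ⌈β * ((n : ℝ) - 1)⌉ : ℤ) : ℂ) / (n : ℂ) ^ s
      = ∑' n : ℕ+, ((⌊β⌋ : ℂ) / (n : ℂ) ^ s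
          + ((⌈γ * (n : ℝ)⌉ - ⌈γ * ((n : ℝ) - 1)⌉ : ℤ) : ℂ) / (n : ℂ) ^ s) := by
        congr 1; funext n; rw [key n]; push_cast; ring
    _ = (⌊β⌋ : ℂ) * riemannZeta s
          + ∑' n : ℕ+, ((⌈γ * (n : ℝ)⌉ - ⌈γ * ((n : ℝ) - 1)⌉ : ℤ) : ℂ) / (n : ℂ) ^ s := by
        rw [Summable.tsum_add hsumf hsumc, ← hzeta, ← tsum_mul_left]
        simp_rw [mul_one_div]
end

section
/- Let (a_n) be a bounded complex sequence and q a positive integer. For every s with Re(s) > 1, ∑_{n≥1} a_{n+q} n^{-s} = ∑_{m=0}^∞ (-q)^m C(-s,m) ∑_{n>q} a_n n^{-s-m}, where the outer series converges absolutely. -/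
open Complex Metric in
lemma iteratedDeriv_one_add_cpow (w : ℂ) (n : ℕ) :
    ∀ z ∈ ball (0:ℂ) 1,
      iteratedDeriv n (fun z : ℂ => (1 + z) ^ w) z
        = (∏ i ∈ Finset.range n, (w - i)) * (1 + z) ^ (w - n) := by
  induction n with
  | zero => intro z _; simp
  | succ n ih =>
    intro z hz
    have hre : ∀ y ∈ ball (0:ℂ) 1, (1 + y) ∈ slitPlane := by
      intro y hy
      rw [mem_ball_zero_iff] at hy
      refine Or.inl ?_
      have : |y.re| ≤ ‖y‖ := abs_re_le_norm y
      simp only [add_re, one_re]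
      linarith [neg_abs_le y.re]
    have hD : ∀ y ∈ ball (0:ℂ) 1,
        HasDerivAt (fun z : ℂ => (∏ i ∈ Finset.range n, (w - i)) * (1 + z) ^ (w - n))
          ((∏ i ∈ Finset.range (n+1), (w - i)) * (1 + y) ^ (w - (n+1:ℕ))) y := by
      intro y hy
      have h1 : HasDerivAt (fun z : ℂ => 1 + z) 1 y := by
        simpa using (hasDerivAt_id y).const_add 1
      have h2 := (h1.cpow_const (c := w - n) (hre y hy)).const_mul (∏ i ∈ Finset.range n, (w - i))
      refine h2.congr_deriv ?_
      rw [Finset.prod_range_succ]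
      push_cast
      have he : w - (n+1 : ℂ) = w - n - 1 := by ring
      rw [he]; ring
    rw [iteratedDeriv_succ]
    have heq : Set.EqOn (iteratedDeriv n (fun z : ℂ => (1 + z) ^ w))
        (fun z => (∏ i ∈ Finset.range n, (w - i)) * (1 + z) ^ (w - n)) (ball (0:ℂ) 1) := ih
    have hev : iteratedDeriv n (fun z : ℂ => (1 + z) ^ w)
        =ᶠ[nhds z] (fun z => (∏ i ∈ Finset.range n, (w - i)) * (1 + z) ^ (w - n)) :=
      Filter.eventuallyEq_of_mem (isOpen_ball.mem_nhds hz) heq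
    rw [hev.deriv_eq]
    exact (hD z hz).deriv

open Complex Metric in
lemma hasSum_one_add_cpow (w : ℂ) {x : ℂ} (hx : ‖x‖ < 1) :
    HasSum (fun m : ℕ => genBinom w m * x ^ m) ((1 + x) ^ w) := by
  have hdiff : DifferentiableOn ℂ (fun z : ℂ => (1 + z) ^ w) (ball (0:ℂ) 1) := by
    intro y hy
    rw [mem_ball_zero_iff] at hy
    have hre : (1 + y) ∈ slitPlane := by
      refine Or.inl ?_
      have : |y.re| ≤ ‖y‖ := abs_re_le_norm y
      simp only [add_re, one_re]
      linarith [neg_abs_le y.re]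
    have h1 : HasDerivAt (fun z : ℂ => 1 + z) 1 y := by
      simpa using (hasDerivAt_id y).const_add 1
    exact ((h1.cpow_const hre).differentiableAt).differentiableWithinAt
  have hx' : x ∈ ball (0:ℂ) 1 := mem_ball_zero_iff.mpr hx
  have H := Complex.hasSum_taylorSeries_on_ball hdiff hx'
  simp only [sub_zero] at H
  have H0 : ∀ m : ℕ, iteratedDeriv m (fun z : ℂ => (1 + z) ^ w) 0
      = ∏ i ∈ Finset.range m, (w - i) := by
    intro m
    rw [iteratedDeriv_one_add_cpow w m 0 (mem_ball_self one_pos)]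
    simp
  simp only [H0, smul_eq_mul] at H
  convert H using 2 with m
  · rfl
  simp [genBinom, div_eq_mul_inv]
  ring

lemma genBinom_succ (w : ℂ) (m : ℕ) :
    genBinom w (m + 1) = genBinom w m * ((w - m) / (m + 1)) := by
  unfold genBinom
  rw [Finset.prod_range_succ, div_mul_div_comm, Nat.factorial_succ]
  congr 1
  push_cast
  ring

lemma genBinom_ne_zero (s : ℂ) (hs : 1 < s.re) (m : ℕ) : genBinom (-s) m ≠ 0 := by
  unfold genBinom
  apply div_ne_zero
  · apply Finset.prod_ne_zero_iff.mpr
    intro i _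
    intro h
    have := congrArg Complex.re h
    simp only [Complex.sub_re, Complex.neg_re, Complex.natCast_re, Complex.zero_re] at this
    have : (0:ℝ) ≤ i := Nat.cast_nonneg i
    linarith
  · exact_mod_cast m.factorial_ne_zero

open Filter Topology in
lemma summable_genBinom_mul (s : ℂ) (hs : 1 < s.re) {r : ℝ} (hr0 : 0 < r) (hr : r < 1) :
    Summable (fun m : ℕ => ‖genBinom (-s) m‖ * r ^ m) := by
  apply summable_of_ratio_test_tendsto_lt_one hr
  · filter_upwards with m
    exact mul_ne_zero (norm_ne_zero_iff.mpr (genBinom_ne_zero s hs m))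
      (pow_ne_zero _ (ne_of_gt hr0))
  · have hT : Tendsto (fun m : ℕ => ((-s - m) / ((m:ℂ) + 1))) atTop (𝓝 (-1)) := by
      have heq : ∀ m : ℕ, (-s - m) / ((m:ℂ) + 1) = -1 + (1 - s) * ((m:ℂ) + 1)⁻¹ := by
        intro m
        have h3 : ((m:ℂ) + 1) ≠ 0 := by norm_cast
        field_simp
        ring
      simp only [heq]
      have h0 : Tendsto (fun m : ℕ => ((m:ℂ) + 1)⁻¹) atTop (𝓝 0) := by
        have hre : Tendsto (fun m : ℕ => (1 : ℝ) / (m + 1)) atTop (𝓝 0) :=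
          tendsto_one_div_add_atTop_nhds_zero_nat
        have := (Complex.continuous_ofReal.tendsto 0).comp hre
        simp only [Complex.ofReal_zero] at this
        convert this using 2 with m
        simp [Function.comp, one_div]
      have := h0.const_mul (1 - s)
      simpa using (tendsto_const_nhds (x := (-1:ℂ))).add this
    have hTn : Tendsto (fun m : ℕ => ‖(-s - m) / ((m:ℂ) + 1)‖) atTop (𝓝 1) := by
      have := hT.norm
      simpa using this
    have hfin := hTn.const_mul r
    rw [mul_one] at hfin
    apply hfin.congr
    intro m
    have hg := genBinom_ne_zero s hs m
    have hnormrec : ‖genBinom (-s) (m+1)‖ = ‖genBinom (-s) m‖ * ‖(-s - m) / ((m:ℂ) + 1)‖ := by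
      rw [genBinom_succ, norm_mul]
    have h1 : ‖genBinom (-s) m‖ ≠ 0 := norm_ne_zero_iff.mpr hg
    rw [Real.norm_of_nonneg (by positivity), Real.norm_of_nonneg (by positivity), hnormrec]
    rw [pow_succ, eq_div_iff (mul_ne_zero h1 (pow_ne_zero m (ne_of_gt hr0)))]
    ring

set_option maxHeartbeats 1000000 in
open Filter Topology in
theorem stmt_16 (a : ℕ → ℂ) (C : ℝ) (hC : ∀ n, ‖a n‖ ≤ C) (q : ℕ) (hq : 0 < q)
    (s : ℂ) (hs : 1 < s.re) :
    (∑' n : ℕ+, a (n + q) * (n : ℂ) ^ (-s))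
        = ∑' m : ℕ, (-(q : ℂ)) ^ m * genBinom (-s) m *
            ∑' k : ℕ, a (q + 1 + k) * ((q + 1 + k : ℕ) : ℂ) ^ (-(s + m))
      ∧ Summable (fun m : ℕ => ‖(-(q : ℂ)) ^ m * genBinom (-s) m *
            ∑' k : ℕ, a (q + 1 + k) * ((q + 1 + k : ℕ) : ℂ) ^ (-(s + m))‖) := by
  set σ := s.re with hσ
  set F : ℕ+ × ℕ → ℂ := fun p =>
    ((-(q:ℂ)) ^ p.2 * genBinom (-s) p.2) *
      (a (↑p.1 + q) * ((↑p.1 + q : ℕ) : ℂ) ^ (-(s + p.2))) with hFdef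
  -- per-n binomial expansion
  have keyN : ∀ n : ℕ+, HasSum (fun m => F (n, m)) (a (↑n + q) * (n : ℂ) ^ (-s)) := by
    intro n
    set N : ℕ := ↑n + q with hNdef
    have hNpos : 0 < N := lt_of_lt_of_le n.pos (Nat.le_add_right _ _)
    have hqN : q < N := by
      have := n.pos; omega
    have hNne : ((N : ℝ)) ≠ 0 := by positivity
    have hNCne : ((N : ℂ)) ≠ 0 := by exact_mod_cast Nat.cast_ne_zero.mpr hNpos.ne'
    set x : ℂ := -((q : ℂ) / (N : ℂ)) with hxdef
    have hx : ‖x‖ < 1 := by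
      rw [hxdef, norm_neg, norm_div, Complex.norm_natCast, Complex.norm_natCast]
      rw [div_lt_one (by positivity)]
      exact_mod_cast hqN
    have hb := (hasSum_one_add_cpow (-s) hx).mul_right (a N * (N : ℂ) ^ (-s))
    have h1x : (1 : ℂ) + x = ((n : ℕ) : ℂ) / (N : ℂ) := by
      rw [hxdef]
      field_simp
      rw [hNdef]
      push_cast
      ring
    have hmul : ((n : ℕ) : ℂ) ^ (-s) = (((n : ℕ) : ℂ) / (N : ℂ)) ^ (-s) * ((N : ℕ) : ℂ) ^ (-s) := by
      have h := Complex.mul_cpow_ofReal_nonneg (a := ((n : ℕ) : ℝ) / ((N : ℕ) : ℝ))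
        (b := ((N : ℕ) : ℝ)) (by positivity) (Nat.cast_nonneg N) (-s)
      push_cast at h
      rw [div_mul_cancel₀ _ hNCne] at h
      exact h
    convert hb using 1
    · rfl
    · funext m
      show ((-(q:ℂ)) ^ m * genBinom (-s) m) *
          (a N * ((N : ℕ) : ℂ) ^ (-(s + m))) = _
      have hxm : x ^ m = (-(q : ℂ)) ^ m / ((N : ℂ)) ^ m := by
        rw [hxdef, neg_div', div_pow]
      have hNc : ((N : ℂ)) ^ (-(s + (m : ℂ))) = ((N : ℂ)) ^ (-s) * (((N : ℂ)) ^ m)⁻¹ := by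
        rw [neg_add, Complex.cpow_add _ _ hNCne]
        congr 1
        rw [Complex.cpow_neg, Complex.cpow_natCast]
      rw [hNc, hxm, div_eq_mul_inv]
      ring
    · -- value equality
      show a N * ((n : ℕ) : ℂ) ^ (-s) = _
      rw [hmul, h1x]
      ring
  -- summability setup
  set r : ℝ := q / (q+1) with hrdef
  have hr0 : 0 < r := by positivity
  have hr1 : r < 1 := by
    rw [hrdef, div_lt_one (by positivity)]
    linarith
  have hsum2 := summable_genBinom_mul s hs hr0 hr1
  have hsum1 : Summable (fun n : ℕ+ => max C 0 * ((↑n + q : ℕ) : ℝ) ^ (-σ)) := by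
    have h0 : Summable (fun n : ℕ => (n : ℝ) ^ (-σ)) :=
      Real.summable_nat_rpow.mpr (by linarith)
    have hinj : Function.Injective (fun n : ℕ+ => (↑n + q : ℕ)) := by
      intro a b h
      simp only at h
      exact PNat.coe_injective (by omega)
    exact (h0.comp_injective hinj).mul_left _
  have hbound : ∀ p : ℕ+ × ℕ, ‖F p‖ ≤
      (max C 0 * ((↑p.1 + q : ℕ) : ℝ) ^ (-σ)) * (‖genBinom (-s) p.2‖ * r ^ p.2) := by
    rintro ⟨n, m⟩
    have hNpos : 0 < (↑n + q : ℕ) := lt_of_lt_of_le n.pos (Nat.le_add_right _ _)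
    have hNR : (0:ℝ) < ((↑n + q : ℕ) : ℝ) := by exact_mod_cast hNpos
    have hnorm : ‖F (n, m)‖ = ‖a (↑n + q)‖ * ‖genBinom (-s) m‖ *
        ((q:ℝ) ^ m * ((↑n + q : ℕ) : ℝ) ^ (-(σ + m))) := by
      rw [hFdef]
      simp only
      rw [norm_mul, norm_mul, norm_mul, norm_pow, norm_neg, Complex.norm_natCast,
        Complex.norm_natCast_cpow_of_pos hNpos]
      have hre : (-(s + (m:ℂ))).re = -(σ + m) := by simp [hσ]
      rw [hre]
      ring
    have hpiece : (q:ℝ) ^ m * ((↑n + q : ℕ) : ℝ) ^ (-(σ + (m:ℝ)))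
        ≤ ((↑n + q : ℕ) : ℝ) ^ (-σ) * r ^ m := by
      have e1 : ((↑n + q : ℕ):ℝ) ^ (-(σ + (m:ℝ)))
          = ((↑n + q : ℕ):ℝ) ^ (-σ) * (((↑n + q : ℕ):ℝ) ^ m)⁻¹ := by
        rw [show -(σ + (m:ℝ)) = -σ + -(m:ℝ) by ring, Real.rpow_add hNR]
        congr 1
        rw [Real.rpow_neg hNR.le, Real.rpow_natCast]
      rw [e1]
      rw [show (q:ℝ) ^ m * (((↑n + q : ℕ):ℝ) ^ (-σ) * (((↑n + q : ℕ):ℝ) ^ m)⁻¹)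
        = ((↑n + q : ℕ):ℝ) ^ (-σ) * ((q:ℝ) / ((↑n + q : ℕ):ℝ)) ^ m by
          rw [div_pow]; ring]
      have hbase : (q:ℝ) / ((↑n + q : ℕ):ℝ) ≤ r := by
        rw [hrdef]
        have h1 : (q:ℝ) + 1 ≤ ((↑n + q : ℕ):ℝ) := by
          have := n.one_le
          push_cast
          have : (1:ℝ) ≤ (↑n : ℕ) := by exact_mod_cast n.one_le
          linarith
        gcongr
      gcongr
    calc ‖F (n, m)‖ = ‖a (↑n + q)‖ * ‖genBinom (-s) m‖ *
          ((q:ℝ) ^ m * ((↑n + q : ℕ) : ℝ) ^ (-(σ + m))) := hnorm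
      _ ≤ max C 0 * ‖genBinom (-s) m‖ *
          (((↑n + q : ℕ) : ℝ) ^ (-σ) * r ^ m) := by
          gcongr
          · exact le_trans (hC _) (le_max_left _ _)
      _ = (max C 0 * ((↑n + q : ℕ) : ℝ) ^ (-σ)) * (‖genBinom (-s) m‖ * r ^ m) := by ring
  have hFnorm : Summable (fun p : ℕ+ × ℕ => ‖F p‖) := by
    apply Summable.of_nonneg_of_le (fun p => norm_nonneg _) hbound
    exact hsum1.mul_of_nonneg hsum2 (fun n => by positivity) (fun m => by positivity)
  have hF : Summable F := hFnorm.of_norm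
  have hcolsn : ∀ m : ℕ, Summable (fun n : ℕ+ => ‖F (n, m)‖) :=
    fun m => hFnorm.prod_symm.prod_factor m
  have hinner : ∀ m : ℕ, ∑' n : ℕ+, F (n, m)
      = (-(q:ℂ)) ^ m * genBinom (-s) m *
          ∑' k : ℕ, a (q + 1 + k) * ((q + 1 + k : ℕ) : ℂ) ^ (-(s + m)) := by
    intro m
    have h1 : ∑' n : ℕ+, F (n, m) = ((-(q:ℂ)) ^ m * genBinom (-s) m) *
        ∑' n : ℕ+, (a (↑n + q) * ((↑n + q : ℕ) : ℂ) ^ (-(s + m))) := by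
      simp only [hFdef]
      exact tsum_mul_left
    rw [h1]
    congr 1
    rw [← Equiv.tsum_eq (Equiv.pnatEquivNat.symm)
      (fun n : ℕ+ => a (↑n + q) * ((↑n + q : ℕ) : ℂ) ^ (-(s + m)))]
    apply tsum_congr
    intro k
    have hk : ((Equiv.pnatEquivNat.symm k : ℕ+) : ℕ) + q = q + 1 + k := by
      have : ((Equiv.pnatEquivNat.symm k : ℕ+) : ℕ) = k + 1 := rfl
      omega
    simp only [hk]
  constructor
  · have hunc : Summable (Function.uncurry fun (n : ℕ+) (m : ℕ) => F (n, m)) := by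
      exact hF
    calc (∑' n : ℕ+, a (↑n + q) * (n : ℂ) ^ (-s))
        = ∑' (n : ℕ+) (m : ℕ), F (n, m) := tsum_congr fun n => ((keyN n).tsum_eq).symm
      _ = ∑' (m : ℕ) (n : ℕ+), F (n, m) := (Summable.tsum_comm hunc).symm
      _ = _ := tsum_congr hinner
  · have hmaj : Summable (fun m : ℕ => ∑' n : ℕ+, ‖F (n, m)‖) :=
      ((summable_prod_of_nonneg (fun p => norm_nonneg _)).mp hFnorm.prod_symm).2
    have hle : ∀ m : ℕ, ‖(-(q : ℂ)) ^ m * genBinom (-s) m *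
        ∑' k : ℕ, a (q + 1 + k) * ((q + 1 + k : ℕ) : ℂ) ^ (-(s + m))‖
          ≤ ∑' n : ℕ+, ‖F (n, m)‖ := by
      intro m
      rw [← hinner m]
      exact norm_tsum_le_tsum_norm (hcolsn m)
    exact Summable.of_nonneg_of_le (fun m => norm_nonneg _) hle hmaj
end
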